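/- arXiv:1301.6531 — 2 statements merged into one kernel-verified Lean document; each statement's English description precedes it below -/
import Mathlib

section
/- Let M be a map and let E0 be a twisted edge of M. Then no extremity of E0 is a leaf, and M \ E0 has the same numbers of vertices, faces and connected components as M and one fewer edge; consequently d(M \ E0) = d(M) − 1. -/
open Equiv Polynomial

open scoped Classical

noncomputable section

variable {α : Type*}

/-- `f` is a *pairing* of the finite set `S`: an involution of the ambient type which
moves exactly the elements of `S` (i.e., a fixpoint-free involution of `S`, extended by
the identity outside of `S`); the pairs of the pairing are the orbits `{a, f a}`. -/
def IsPairing (S : Finset α) (f : Equiv.Perm α) : Prop :=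
  (∀ a, f (f a) = a) ∧ ∀ a, f a ≠ a ↔ a ∈ S

/-- The pairing `P_{{s₁,s₂}}` obtained from the pairing `f` by removing the elements
`s₁, s₂` : if `{s₁,s₂}` is a pair of `f` it is simply deleted; otherwise the pairs
containing `s₁` and `s₂` are deleted and the partners `f s₁`, `f s₂` are matched
together. -/
def removeP (f : Equiv.Perm α) (s₁ s₂ : α) : Equiv.Perm α :=
  Equiv.swap s₁ s₂ * Equiv.swap s₁ (f s₂) * Equiv.swap s₂ (f s₁) * f

/-- `t` lies in the polygon of `L(b,w)` containing `s`, in *even position* with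
respect to `s`: `t` is obtained from `s` by an odd alternating word in the
involutions `b` and `w`. -/
def EvenPos (b w : Equiv.Perm α) (s t : α) : Prop :=
  ∃ j : ℤ, t = ((w * b) ^ j * b) s

/-- `t` lies in the polygon of `L(b,w)` containing `s`, in *odd position* with respect
to `s`: `t` is obtained from `s` by an even alternating word in the involutions
`b` and `w`. -/
def OddPos (b w : Equiv.Perm α) (s t : α) : Prop :=
  ∃ j : ℤ, t = ((w * b) ^ j) s

/-- `s` and `t` lie in the same polygon of `L(b,w)`. -/
def SameFace (b w : Equiv.Perm α) (s t : α) : Prop :=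
  EvenPos b w s t ∨ OddPos b w s t

/-- The edge `{s,t}` is *straight*: both edge-sides lie in the same face,
in even position. -/
def IsStraight (b w : Equiv.Perm α) (s t : α) : Prop :=
  SameFace b w s t ∧ EvenPos b w s t

/-- The edge `{s,t}` is *twisted*: both edge-sides lie in the same face,
in odd position. -/
def IsTwisted (b w : Equiv.Perm α) (s t : α) : Prop :=
  SameFace b w s t ∧ OddPos b w s t

/-- The edge `{s,t}` is an *interface* edge: its edge-sides lie in two
different faces. -/
def IsInterface (b w : Equiv.Perm α) (s t : α) : Prop :=
  ¬ SameFace b w s t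

/-- The polygon (face) of `L(b,w)` containing `s`, as the set of its edge-sides. -/
def faceOf (S : Finset α) (b w : Equiv.Perm α) (s : α) : Finset α :=
  S.filter (SameFace b w s)

/-- The collection of polygons (faces) of `L(b,w)`. -/
def faces (S : Finset α) (b w : Equiv.Perm α) : Finset (Finset α) :=
  S.image (faceOf S b w)

/-- The number of polygons (faces) of `L(b,w)`. -/
def numFaces (S : Finset α) (b w : Equiv.Perm α) : ℕ :=
  (faces S b w).card

/-- The *type* of the couple of pairings `(b,w)`: the multiset of half-lengths of the
polygons of `L(b,w)`. -/
def faceType (S : Finset α) (b w : Equiv.Perm α) : Multiset ℕ :=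
  (faces S b w).val.map fun F => F.card / 2

/-- `s` and `t` lie in the same connected component of the map `(b,w,e)`:
`t` is obtained from `s` by applying partner maps in `b`, `w`, `e` repeatedly. -/
def SameComponent (b w e : Equiv.Perm α) (s t : α) : Prop :=
  ∃ g ∈ Subgroup.closure ({b, w, e} : Set (Equiv.Perm α)), g s = t

/-- The number of connected components of the map `(S, b, w, e)`. -/
def numComponents (S : Finset α) (b w e : Equiv.Perm α) : ℕ :=
  (S.image fun s => S.filter (SameComponent b w e s)).card

/-- The number of vertices of the map `(S, b, w, e)`: black vertices are the polygons
of `L(b,e)`, white vertices are the polygons of `L(w,e)`. -/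
def numVertices (S : Finset α) (b w e : Equiv.Perm α) : ℕ :=
  numFaces S b e + numFaces S w e

/-- The number of edges of a map with edge-side set `S`. -/
def numEdges (S : Finset α) : ℕ := S.card / 2

/-- The Euler characteristic `χ(M) = |V(M)| - |E(M)| + |F(M)|` of the map
`M = (S, b, w, e)`. -/
def eulerChar (S : Finset α) (b w e : Equiv.Perm α) : ℤ :=
  (numVertices S b w e : ℤ) - (numEdges S : ℤ) + (numFaces S b w : ℤ)

/-- The quantity `d(M) = 2·(number of connected components of M) - χ(M)`. -/
def dInv (S : Finset α) (b w e : Equiv.Perm α) : ℤ :=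
  2 * (numComponents S b w e : ℤ) - eulerChar S b w e

/-- The edge `{s, e s}` of the map `(b, w, e)` is a *bridge*: either one of its
extremities is a leaf (the pair belongs to `b` or to `w` as well), or its two
extremities lie in different connected components of the map with this edge removed. -/
def IsBridge (b w e : Equiv.Perm α) (s : α) : Prop :=
  (b s = e s ∨ w s = e s) ∨
    ¬ SameComponent (removeP b s (e s)) (removeP w s (e s)) (removeP e s (e s))
        (b s) (w s)

/-- The weight of the edge `{s,t}` in the map with face structure given by `(b,w)`,
as a polynomial in the variable `γ` (over `ℚ`): `1` for a straight edge, `γ` for a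
twisted edge, `1/2` for an interface edge. -/
def edgeWeight (b w : Equiv.Perm α) (s t : α) : Polynomial ℚ :=
  if IsStraight b w s t then 1
  else if IsTwisted b w s t then Polynomial.X
  else Polynomial.C (1 / 2)

/-- The weight `w_{M,≺}` of a map `(b,w,e)` equipped with a history, the latter
encoded as the list of the edges in increasing order (each edge represented by one
of its edge-sides): the product of the weights of the edges, each weight being
computed in the map in which all previous edges have already been removed. -/
def histWeight : Equiv.Perm α → Equiv.Perm α → Equiv.Perm α → List α → Polynomial ℚ
  | _, _, _, [] => 1
  | b, w, e, s :: L =>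
      edgeWeight b w s (e s) *
        histWeight (removeP b s (e s)) (removeP w s (e s)) (removeP e s (e s)) L

/-- `L` encodes a *history* (a linear order on the edges) of the map with edge-side
set `S` and edge pairing `e`: it lists every edge exactly once, each edge being
represented by its smaller edge-side. -/
def IsHistory [LinearOrder α] (S : Finset α) (e : Equiv.Perm α) (L : List α) : Prop :=
  L.Nodup ∧ (∀ s ∈ L, s ∈ S ∧ s < e s) ∧ ∀ a ∈ S, a ∈ L ∨ e a ∈ L

/-- The *measure of non-orientability* `w_M` of the map `(S,b,w,e)`: the average of
`w_{M,≺}` over all `n!` histories `≺`, as a polynomial in the variable `γ` over `ℚ`. -/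
def mapWeight [LinearOrder α] (S : Finset α) (b w e : Equiv.Perm α) : Polynomial ℚ :=
  Polynomial.C (1 / ((numEdges S).factorial : ℚ)) *
    ∑ F ∈ (Fintype.piFinset fun _ : Fin (numEdges S) => S).filter
        (fun F => IsHistory S e (List.ofFn F)),
      histWeight b w e (List.ofFn F)

/-- The number of embeddings `N_M(λ)` of the underlying bipartite graph of the map
`(S,b,w,e)` into the Young diagram whose list of row lengths is `lam`: an embedding
maps black vertices (polygons of `L(b,e)`) to rows, white vertices (polygons of
`L(w,e)`) to columns, and each edge to the box at the corresponding intersection;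
it is encoded by a pair of functions on edge-sides that are constant on vertices. -/
def NMap (lam : List ℕ) (S : Finset α) (b w e : Equiv.Perm α) : ℕ :=
  Nat.card {fp : (α → ℕ) × (α → ℕ) //
    (∀ s, s ∉ S → fp.1 s = 0 ∧ fp.2 s = 0) ∧
    (∀ s ∈ S, fp.1 (b s) = fp.1 s ∧ fp.1 (e s) = fp.1 s) ∧
    (∀ s ∈ S, fp.2 (w s) = fp.2 s ∧ fp.2 (e s) = fp.2 s) ∧
    ∀ s ∈ S, fp.2 s < lam.getD (fp.1 s) 0}

/-- The orientability generating series `\widehat{Ch}^{(α)}_π(λ)`, where the face-type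
`π` is realized by the fixed couple of pairings `(b,w)` of `S`, `lam` is the list of
row lengths of the Young diagram `λ`, and `a` is the Jack parameter `α`: the sum over
all pairings `e` of `S` (i.e., over all maps of face-type `π`) of
`(-1/√α)^{|V_•(M)|} (√α)^{|V_∘(M)|} w_M N_M(λ)`, times the sign `(-1)^{ℓ(π)}`,
where `w_M` is evaluated at `γ = (1-α)/√α`. -/
def genSeries [Fintype α] [LinearOrder α] (lam : List ℕ) (S : Finset α)
    (b w : Equiv.Perm α) (a : ℝ) : ℝ :=
  (-1 : ℝ) ^ numFaces S b w *
    ∑ e ∈ Finset.univ.filter fun e : Equiv.Perm α => IsPairing S e,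
      (-1 / Real.sqrt a) ^ numFaces S b e * (Real.sqrt a) ^ numFaces S w e *
        Polynomial.aeval ((1 - a) / Real.sqrt a) (mapWeight S b w e) *
          (NMap lam S b w e : ℝ)

/-- The number of embeddings `N_G(λ)` of the bipartite graph `G` with black vertex set
`ι`, white vertex set `κ` and edge relation `Edg` into the Young diagram whose list of
row lengths is `lam`: black vertices are mapped to rows of `λ`, white vertices to
columns of `λ`, and every edge to the box at the corresponding intersection, which
must belong to `λ`. -/
def NGraph {ι κ : Type*} (lam : List ℕ) (Edg : ι → κ → Prop) : ℕ :=
  Nat.card {fp : (ι → ℕ) × (κ → ℕ) //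
    (∀ u, 0 < lam.getD (fp.1 u) 0) ∧
    (∀ v, ∃ i, fp.2 v < lam.getD i 0) ∧
    ∀ u v, Edg u v → fp.2 v < lam.getD (fp.1 u) 0}

namespace RT
set_option linter.unusedSectionVars false

lemma inv_self {f : Perm α} (hf : ∀ a, f (f a) = a) : f * f = 1 :=
  Equiv.ext fun a => hf a

lemma inv_eq {f : Perm α} (hf : ∀ a, f (f a) = a) : f⁻¹ = f :=
  inv_eq_of_mul_eq_one_right (inv_self hf)

lemma inv_gf {f g : Perm α} (hf : ∀ a, f (f a) = a) (hg : ∀ a, g (g a) = a) :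
    (g * f)⁻¹ = f * g := by
  rw [mul_inv_rev, inv_eq hf, inv_eq hg]

lemma semiconj1 (f g : Perm α) (j : ℤ) :
    f * (g * f) ^ j = (f * g) ^ j * f := by
  have h : SemiconjBy f (g * f) (f * g) := by
    unfold SemiconjBy; group
  exact h.zpow_right j

lemma fg_zpow {f g : Perm α} (hf : ∀ a, f (f a) = a) (hg : ∀ a, g (g a) = a) (j : ℤ) :
    (f * g) ^ j = (g * f) ^ (-j) := by
  rw [← inv_gf hf hg, inv_zpow, ← zpow_neg]

section SF
variable {f g : Perm α} (hf : ∀ a, f (f a) = a) (hg : ∀ a, g (g a) = a)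

omit hf hg in
lemma mem_closure_f : f ∈ Subgroup.closure ({f, g} : Set (Perm α)) :=
  Subgroup.subset_closure (by simp)

omit hf hg in
lemma mem_closure_g : g ∈ Subgroup.closure ({f, g} : Set (Perm α)) :=
  Subgroup.subset_closure (by simp)

include hf hg in
lemma closure_form : ∀ h ∈ Subgroup.closure ({f, g} : Set (Perm α)),
    (∃ j : ℤ, h = (g * f) ^ j) ∨ (∃ j : ℤ, h = (g * f) ^ j * f) := by
  intro h hh
  induction hh using Subgroup.closure_induction with
  | mem x hx =>
    rcases hx with rfl | rfl
    · exact Or.inr ⟨0, by simp⟩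
    · exact Or.inr ⟨1, by rw [zpow_one, mul_assoc, inv_self hf, mul_one]⟩
  | one => exact Or.inl ⟨0, by simp⟩
  | mul x y hx hy ihx ihy =>
    rcases ihx with ⟨i, rfl⟩ | ⟨i, rfl⟩ <;> rcases ihy with ⟨j, rfl⟩ | ⟨j, rfl⟩
    · exact Or.inl ⟨i + j, by rw [zpow_add]⟩
    · exact Or.inr ⟨i + j, by rw [zpow_add, mul_assoc]⟩
    · refine Or.inr ⟨i - j, ?_⟩
      rw [mul_assoc, semiconj1 f g j, fg_zpow hf hg, ← mul_assoc, ← zpow_add,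
        ← sub_eq_add_neg]
    · refine Or.inl ⟨i - j, ?_⟩
      rw [mul_assoc, ← mul_assoc f ((g*f)^j) f, semiconj1 f g j, fg_zpow hf hg,
        mul_assoc ((g*f)^(-j)), inv_self hf, mul_one, ← zpow_add, ← sub_eq_add_neg]
  | inv x hx ihx =>
    rcases ihx with ⟨i, rfl⟩ | ⟨i, rfl⟩
    · exact Or.inl ⟨-i, by rw [← zpow_neg]⟩
    · refine Or.inr ⟨i, ?_⟩
      rw [mul_inv_rev, inv_eq hf, ← zpow_neg, semiconj1 f g (-i), fg_zpow hf hg, neg_neg]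

include hf hg in
lemma sameFace_iff {x y : α} : SameFace f g x y ↔
    ∃ h ∈ Subgroup.closure ({f, g} : Set (Perm α)), h x = y := by
  constructor
  · rintro (⟨j, rfl⟩ | ⟨j, rfl⟩)
    · exact ⟨(g * f) ^ j * f, mul_mem (zpow_mem (mul_mem mem_closure_g mem_closure_f) j)
        mem_closure_f, rfl⟩
    · exact ⟨(g * f) ^ j, zpow_mem (mul_mem mem_closure_g mem_closure_f) j, rfl⟩
  · rintro ⟨h, hh, rfl⟩
    rcases closure_form hf hg h hh with ⟨j, rfl⟩ | ⟨j, rfl⟩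
    · exact Or.inr ⟨j, rfl⟩
    · exact Or.inl ⟨j, rfl⟩

omit hf hg in
lemma sf_refl (x : α) : SameFace f g x x := Or.inr ⟨0, by simp⟩

include hf hg in
lemma sf_symm {x y : α} (h : SameFace f g x y) : SameFace f g y x := by
  rw [sameFace_iff hf hg] at h ⊢
  rcases h with ⟨h, hh, rfl⟩
  exact ⟨h⁻¹, inv_mem hh, by simp⟩

include hf hg in
lemma sf_trans {x y z : α} (h1 : SameFace f g x y) (h2 : SameFace f g y z) :
    SameFace f g x z := by
  rw [sameFace_iff hf hg] at h1 h2 ⊢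
  rcases h1 with ⟨h1, hh1, rfl⟩
  rcases h2 with ⟨h2, hh2, rfl⟩
  exact ⟨h2 * h1, mul_mem hh2 hh1, rfl⟩

omit hf hg in
lemma sf_step_f (x : α) : SameFace f g x (f x) := Or.inl ⟨0, by simp⟩

omit hg in
include hf in
lemma sf_step_g (x : α) : SameFace f g x (g x) :=
  Or.inl ⟨1, by rw [zpow_one, mul_assoc, inv_self hf, mul_one]⟩

end SF

lemma cycle_connect {c : Perm α} {R : α → α → Prop} (hrefl : ∀ x, R x x)
    (htrans : ∀ {x y z}, R x y → R y z → R x z) {a₁ a₂ : α} (h21 : R a₂ a₁)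
    (hstep : ∀ x, (∃ n : ℕ, (c ^ n) x = a₁) → x ≠ a₁ → x ≠ a₂ → R x (c x)) :
    ∀ (n : ℕ) (x : α), (c ^ n) x = a₁ → R x a₁ := by
  intro n
  induction n with
  | zero => intro x hx; simp at hx; exact hx ▸ hrefl x
  | succ n ih =>
    intro x hx
    by_cases h1 : x = a₁
    · exact h1 ▸ hrefl a₁
    by_cases h2 : x = a₂
    · exact h2 ▸ h21
    have hx' : (c ^ n) (c x) = a₁ := by
      rw [← Equiv.Perm.mul_apply, ← pow_succ]; exact hx
    exact htrans (hstep x ⟨n + 1, hx⟩ h1 h2) (ih (c x) hx')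

lemma exists_period {c : Perm α} {S : Finset α} (hc : ∀ a ∈ S, c a ∈ S)
    {x : α} (hx : x ∈ S) : ∃ d : ℕ, 0 < d ∧ (c ^ d) x = x := by
  have hmem : ∀ n : ℕ, (c ^ n) x ∈ S := by
    intro n
    induction n with
    | zero => simpa using hx
    | succ n ih =>
      have h : (c ^ (n + 1)) x = c ((c ^ n) x) := by
        rw [pow_succ', Equiv.Perm.mul_apply]
      rw [h]; exact hc _ ih
  obtain ⟨i, j, hij, hfij⟩ := Finite.exists_ne_map_eq_of_infinite
    (fun n : ℕ => (⟨(c ^ n) x, hmem n⟩ : {a // a ∈ S}))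
  have hij' : (c ^ i) x = (c ^ j) x := congrArg Subtype.val hfij
  have key : ∀ i j : ℕ, i < j → (c ^ i) x = (c ^ j) x →
      ∃ d : ℕ, 0 < d ∧ (c ^ d) x = x := by
    intro i j hlt heq
    refine ⟨j - i, by omega, ?_⟩
    have h1 : (c ^ i) ((c ^ (j - i)) x) = (c ^ i) x := by
      rw [← Equiv.Perm.mul_apply, ← pow_add, show i + (j - i) = j by omega]
      exact heq.symm
    exact (c ^ i).injective h1
  rcases Nat.lt_or_ge i j with h | h
  · exact key i j h hij'
  · exact key j i (by omega) hij'.symm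

theorem _root_.Equiv.Perm.inv_apply_self {β : Type*} (f : Perm β) (x : β) : f⁻¹ (f x) = x :=
  f.symm_apply_apply x

theorem _root_.Equiv.Perm.apply_inv_self {β : Type*} (f : Perm β) (x : β) : f (f⁻¹ x) = x :=
  f.apply_symm_apply x

lemma orbit_mono {A A' : Set (Perm α)}
    (h : ∀ f ∈ A', ∀ z, ∃ h ∈ Subgroup.closure A, h z = f z) :
    ∀ g ∈ Subgroup.closure A', ∀ z, ∃ h ∈ Subgroup.closure A, h z = g z := by
  intro g hg
  induction hg using Subgroup.closure_induction with
  | mem x hx => exact h x hx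
  | one => exact fun z => ⟨1, one_mem _, rfl⟩
  | mul x y hx hy ihx ihy =>
    intro z
    obtain ⟨h2, hh2, he2⟩ := ihy z
    obtain ⟨h1, hh1, he1⟩ := ihx (y z)
    refine ⟨h1 * h2, mul_mem hh1 hh2, ?_⟩
    rw [Equiv.Perm.mul_apply, Equiv.Perm.mul_apply, he2, he1]
  | inv x hx ihx =>
    intro z
    obtain ⟨h1, hh1, he1⟩ := ihx (x⁻¹ z)
    refine ⟨h1⁻¹, inv_mem hh1, ?_⟩
    rw [Equiv.Perm.apply_inv_self] at he1
    have h3 := congrArg (⇑h1⁻¹) he1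
    rw [Equiv.Perm.inv_apply_self] at h3
    exact h3.symm

lemma orbit_untouched {A A' : Set (Perm α)} {s : α}
    (h : ∀ f ∈ A, ∀ z, ¬(∃ h ∈ Subgroup.closure A, h s = z) →
      ∃ h' ∈ Subgroup.closure A', h' z = f z) :
    ∀ g ∈ Subgroup.closure A, ∀ z, ¬(∃ h ∈ Subgroup.closure A, h s = z) →
      ∃ h' ∈ Subgroup.closure A', h' z = g z := by
  intro g hg
  induction hg using Subgroup.closure_induction with
  | mem x hx => exact h x hx
  | one => exact fun z _ => ⟨1, one_mem _, rfl⟩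
  | mul x y hx hy ihx ihy =>
    intro z hz
    have hyz : ¬(∃ h ∈ Subgroup.closure A, h s = y z) := by
      rintro ⟨h0, hh0, he0⟩
      exact hz ⟨y⁻¹ * h0, mul_mem (inv_mem hy) hh0,
        by rw [Equiv.Perm.mul_apply, he0, Equiv.Perm.inv_apply_self]⟩
    obtain ⟨h2, hh2, he2⟩ := ihy z hz
    obtain ⟨h1, hh1, he1⟩ := ihx (y z) hyz
    refine ⟨h1 * h2, mul_mem hh1 hh2, ?_⟩
    rw [Equiv.Perm.mul_apply, Equiv.Perm.mul_apply, he2, he1]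
  | inv x hx ihx =>
    intro z hz
    have hxz : ¬(∃ h ∈ Subgroup.closure A, h s = x⁻¹ z) := by
      rintro ⟨h0, hh0, he0⟩
      exact hz ⟨x * h0, mul_mem hx hh0,
        by rw [Equiv.Perm.mul_apply, he0, Equiv.Perm.apply_inv_self]⟩
    obtain ⟨h1, hh1, he1⟩ := ihx (x⁻¹ z) hxz
    refine ⟨h1⁻¹, inv_mem hh1, ?_⟩
    rw [Equiv.Perm.apply_inv_self] at he1
    have h3 := congrArg (⇑h1⁻¹) he1
    rw [Equiv.Perm.inv_apply_self] at h3
    exact h3.symm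

lemma orbit_Q {A : Set (Perm α)} {Q : α → Prop}
    (hsq : ∀ f ∈ A, ∀ z, f (f z) = z)
    (hA : ∀ f ∈ A, ∀ z, Q z → Q (f z)) :
    ∀ g ∈ Subgroup.closure A, ∀ z, (Q z ↔ Q (g z)) := by
  intro g hg
  induction hg using Subgroup.closure_induction with
  | mem x hx =>
    intro z
    refine ⟨hA x hx z, fun h => ?_⟩
    have h2 := hA x hx (x z) h
    rwa [hsq x hx z] at h2
  | one => simp
  | mul x y hx hy ihx ihy =>
    intro z
    rw [Equiv.Perm.mul_apply]
    exact (ihy z).trans (ihx (y z))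
  | inv x hx ihx =>
    intro z
    have h2 := ihx (x⁻¹ z)
    rw [Equiv.Perm.apply_inv_self] at h2
    exact h2.symm


section RemoveP
variable {f : Perm α} {s t : α}

lemma removeP_apply (f : Perm α) (s t x : α) :
    removeP f s t x = Equiv.swap s t (Equiv.swap s (f t) (Equiv.swap t (f s) (f x))) := by
  simp [removeP, Equiv.Perm.mul_apply]

variable (hst : s ≠ t) (hfs : f s ≠ s) (hft : f t ≠ t) (hfst : f s ≠ t)
  (hf : ∀ a, f (f a) = a)

include hfst hf in
lemma removeP_fts : f t ≠ s := fun h => hfst (by rw [← h]; exact hf t)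

include hst hft in
lemma removeP_fst : removeP f s t s = s := by
  rw [removeP_apply, Equiv.swap_apply_right,
    Equiv.swap_apply_of_ne_of_ne hst.symm hft.symm, Equiv.swap_apply_right]

include hst hft hf in
lemma removeP_snd : removeP f s t t = t := by
  rw [removeP_apply,
    Equiv.swap_apply_of_ne_of_ne hft (fun h => hst (f.injective h).symm),
    Equiv.swap_apply_right, Equiv.swap_apply_left]

include hst hfs hft hfst hf in
lemma removeP_fs : removeP f s t (f s) = f t := by
  rw [removeP_apply, hf s, Equiv.swap_apply_of_ne_of_ne hst hfs.symm,
    Equiv.swap_apply_left,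
    Equiv.swap_apply_of_ne_of_ne (removeP_fts hfst hf) hft]

include hst hfs hfst hf in
lemma removeP_ft : removeP f s t (f t) = f s := by
  rw [removeP_apply, hf t, Equiv.swap_apply_left,
    Equiv.swap_apply_of_ne_of_ne hfs (fun h => hst (f.injective h)),
    Equiv.swap_apply_of_ne_of_ne hfs hfst]

include hf in
lemma removeP_other (x : α) (h1 : x ≠ s) (h2 : x ≠ t) (h3 : x ≠ f s) (h4 : x ≠ f t) :
    removeP f s t x = f x := by
  have e1 : f x ≠ t := fun h => h4 (by rw [← hf x, h])
  have e2 : f x ≠ f s := fun h => h1 (f.injective h)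
  have e3 : f x ≠ s := fun h => h3 (by rw [← hf x, h])
  have e4 : f x ≠ f t := fun h => h2 (f.injective h)
  rw [removeP_apply, Equiv.swap_apply_of_ne_of_ne e1 e2,
    Equiv.swap_apply_of_ne_of_ne e3 e4, Equiv.swap_apply_of_ne_of_ne e3 e1]

include hst hfs hft hfst hf in
lemma removeP_invol (x : α) : removeP f s t (removeP f s t x) = x := by
  by_cases h1 : x = s
  · rw [h1, removeP_fst hst hft, removeP_fst hst hft]
  by_cases h2 : x = t
  · rw [h2, removeP_snd hst hft hf, removeP_snd hst hft hf]
  by_cases h3 : x = f s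
  · rw [h3, removeP_fs hst hfs hft hfst hf, removeP_ft hst hfs hfst hf]
  by_cases h4 : x = f t
  · rw [h4, removeP_ft hst hfs hfst hf, removeP_fs hst hfs hft hfst hf]
  · have e1 : f x ≠ s := fun h => h3 (by rw [← hf x, h])
    have e2 : f x ≠ t := fun h => h4 (by rw [← hf x, h])
    have e3 : f x ≠ f s := fun h => h1 (f.injective h)
    have e4 : f x ≠ f t := fun h => h2 (f.injective h)
    rw [removeP_other hf x h1 h2 h3 h4, removeP_other hf (f x) e1 e2 e3 e4]
    exact hf x

variable (hadj : f s = t)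

include hf hadj in
lemma removeP_adj_apply (x : α) : removeP f s t x = Equiv.swap s t (f x) := by
  have hts : f t = s := by rw [← hadj]; exact hf s
  rw [removeP_apply, hts, hadj, Equiv.swap_self, Equiv.swap_self,
    Equiv.refl_apply, Equiv.refl_apply]

include hf hadj in
lemma removeP_adj_fst : removeP f s t s = s := by
  rw [removeP_adj_apply hf hadj, hadj, Equiv.swap_apply_right]

include hf hadj in
lemma removeP_adj_snd : removeP f s t t = t := by
  have hts : f t = s := by rw [← hadj]; exact hf s
  rw [removeP_adj_apply hf hadj, hts, Equiv.swap_apply_left]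

include hf hadj in
lemma removeP_adj_other (x : α) (h1 : x ≠ s) (h2 : x ≠ t) :
    removeP f s t x = f x := by
  have hts : f t = s := by rw [← hadj]; exact hf s
  have e1 : f x ≠ s := fun h => h2 (by rw [← hf x, h]; exact hadj)
  have e2 : f x ≠ t := fun h => h1 (by rw [← hf x, h]; exact hts)
  rw [removeP_adj_apply hf hadj, Equiv.swap_apply_of_ne_of_ne e1 e2]

include hst hf hadj in
lemma removeP_adj_invol (x : α) : removeP f s t (removeP f s t x) = x := by
  by_cases h1 : x = s
  · rw [h1, removeP_adj_fst hf hadj, removeP_adj_fst hf hadj]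
  by_cases h2 : x = t
  · rw [h2, removeP_adj_snd hf hadj, removeP_adj_snd hf hadj]
  · have hts : f t = s := by rw [← hadj]; exact hf s
    have e1 : f x ≠ s := fun h => h2 (by rw [← hf x, h]; exact hadj)
    have e2 : f x ≠ t := fun h => h1 (by rw [← hf x, h]; exact hts)
    rw [removeP_adj_other hf hadj x h1 h2, removeP_adj_other hf hadj (f x) e1 e2]
    exact hf x

end RemoveP

lemma card_image_ker {β γ : Type*} [DecidableEq β] [DecidableEq γ]
    (s : Finset α) (f : α → β) (g : α → γ)
    (h : ∀ a ∈ s, ∀ b ∈ s, (f a = f b ↔ g a = g b)) :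
    (s.image f).card = (s.image g).card := by
  apply Finset.card_bij (fun C hC => g (Finset.mem_image.mp hC).choose)
  · intro C hC
    obtain ⟨ha, _⟩ := (Finset.mem_image.mp hC).choose_spec
    exact Finset.mem_image_of_mem g ha
  · intro C1 h1 C2 h2 heq
    obtain ⟨ha1, hf1⟩ := (Finset.mem_image.mp h1).choose_spec
    obtain ⟨ha2, hf2⟩ := (Finset.mem_image.mp h2).choose_spec
    rw [← hf1, ← hf2]
    exact (h _ ha1 _ ha2).mpr heq
  · intro D hD
    obtain ⟨a, ha, rfl⟩ := Finset.mem_image.mp hD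
    refine ⟨f a, Finset.mem_image_of_mem f ha, ?_⟩
    obtain ⟨ha', hf'⟩ := (Finset.mem_image.mp (Finset.mem_image_of_mem f ha)).choose_spec
    exact (h _ ha' _ ha).mp hf'

lemma card_classes_eq {S : Finset α} {s t : α} {R R' : α → α → Prop}
    (hs : s ∈ S) (ht : t ∈ S)
    (hRr : ∀ x, R x x) (hRs : ∀ {x y}, R x y → R y x)
    (hRt : ∀ {x y z}, R x y → R y z → R x z)
    (hR'r : ∀ x, R' x x) (hR's : ∀ {x y}, R' x y → R' y x)
    (hR't : ∀ {x y z}, R' x y → R' y z → R' x z)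
    {x₀ : α} (hx₀S : x₀ ∈ S) (hx₀s : x₀ ≠ s) (hx₀t : x₀ ≠ t)
    (hRsx₀ : R s x₀) (hRst : R s t)
    (hiff : ∀ x ∈ S \ {s, t}, ∀ y ∈ S \ {s, t}, (R' x y ↔ R x y)) :
    ((S \ {s, t}).image fun x => (S \ {s, t}).filter (R' x)).card
      = (S.image fun x => S.filter (R x)).card := by
  classical
  have hx₀' : x₀ ∈ S \ {s, t} := by
    rw [Finset.mem_sdiff, Finset.mem_insert, Finset.mem_singleton]
    exact ⟨hx₀S, by tauto⟩
  have hfilter : ∀ {a a'}, R a a' → S.filter (R a) = S.filter (R a') := by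
    intro a a' haa'
    ext y
    simp only [Finset.mem_filter, and_congr_right_iff]
    exact fun _ => ⟨fun h => hRt (hRs haa') h, fun h => hRt haa' h⟩
  have h1 : S.image (fun x => S.filter (R x))
      = (S \ {s, t}).image (fun x => S.filter (R x)) := by
    apply Finset.Subset.antisymm
    · intro C hC
      obtain ⟨x, hx, rfl⟩ := Finset.mem_image.mp hC
      by_cases hxs : x = s
      · exact Finset.mem_image.mpr ⟨x₀, hx₀',
          by rw [hxs]; exact (hfilter (hRs hRsx₀))⟩
      by_cases hxt : x = t
      · exact Finset.mem_image.mpr ⟨x₀, hx₀',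
          by rw [hxt]; exact (hfilter (hRt (hRs hRsx₀) hRst))⟩
      · exact Finset.mem_image.mpr ⟨x, by
          rw [Finset.mem_sdiff, Finset.mem_insert, Finset.mem_singleton]
          exact ⟨hx, by tauto⟩, rfl⟩
    · exact Finset.image_subset_image Finset.sdiff_subset
  rw [h1]
  apply card_image_ker
  intro a ha a' ha'
  have haS : a ∈ S := (Finset.mem_sdiff.mp ha).1
  have ha'S : a' ∈ S := (Finset.mem_sdiff.mp ha').1
  have hfilter' : ∀ {u u'}, R' u u' →
      (S \ {s, t}).filter (R' u) = (S \ {s, t}).filter (R' u') := by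
    intro u u' huu'
    ext y
    simp only [Finset.mem_filter, and_congr_right_iff]
    exact fun _ => ⟨fun h => hR't (hR's huu') h, fun h => hR't huu' h⟩
  constructor
  · intro hfe
    have hab' : R' a a' := by
      have hmem : a' ∈ (S \ {s, t}).filter (R' a) :=
        hfe ▸ (Finset.mem_filter.mpr ⟨ha', hR'r a'⟩)
      exact (Finset.mem_filter.mp hmem).2
    exact hfilter ((hiff a ha a' ha').mp hab')
  · intro hfe
    have hab : R a a' := by
      have hmem : a' ∈ S.filter (R a) := hfe ▸ (Finset.mem_filter.mpr ⟨ha'S, hRr a'⟩)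
      exact (Finset.mem_filter.mp hmem).2
    exact hfilter' ((hiff a ha a' ha').mpr hab)

section Main
variable {S : Finset α} {b w e : Perm α} {s : α}

lemma pair_ne (hb : IsPairing S b) {a : α} (ha : a ∈ S) : b a ≠ a := (hb.2 a).mpr ha

lemma pair_mem (hb : IsPairing S b) {a : α} (ha : a ∈ S) : b a ∈ S :=
  (hb.2 (b a)).mp (by rw [hb.1 a]; exact Ne.symm ((hb.2 a).mpr ha))

lemma zpow_mem_S {c : Perm α} (hc1 : ∀ a ∈ S, c a ∈ S) (hc2 : ∀ a ∈ S, c⁻¹ a ∈ S)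
    {a : α} (ha : a ∈ S) : ∀ j : ℤ, (c ^ j) a ∈ S := by
  intro j
  induction j using Int.induction_on with
  | zero => simpa using ha
  | succ n ih =>
    have h : (c ^ ((n : ℤ) + 1)) a = c ((c ^ (n : ℤ)) a) := by
      rw [add_comm, zpow_add, zpow_one, Equiv.Perm.mul_apply]
    rw [h]; exact hc1 _ ih
  | pred n ih =>
    have h : (c ^ (-(n : ℤ) - 1)) a = c⁻¹ ((c ^ (-(n : ℤ))) a) := by
      rw [sub_eq_add_neg, add_comm, zpow_add, zpow_neg_one, Equiv.Perm.mul_apply]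
    rw [h]; exact hc2 _ ih

section Faces
variable (hb : IsPairing S b) (hw : IsPairing S w) (hs : s ∈ S)

include hb hw in
lemma c_mem : ∀ a ∈ S, (w * b) a ∈ S := fun a ha =>
  (Equiv.Perm.mul_apply w b a) ▸ pair_mem hw (pair_mem hb ha)

include hb hw in
lemma c_inv_mem : ∀ a ∈ S, (w * b)⁻¹ a ∈ S := by
  intro a ha
  rw [inv_gf hb.1 hw.1, Equiv.Perm.mul_apply]
  exact pair_mem hb (pair_mem hw ha)

include hb hw in
lemma c_zpow_mem {a : α} (ha : a ∈ S) (j : ℤ) : ((w * b) ^ j) a ∈ S :=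
  zpow_mem_S (c_mem hb hw) (c_inv_mem hb hw) ha j

include hb hw in
lemma conj_b (j : ℤ) : b * (w * b) ^ j = (w * b) ^ (-j) * b := by
  rw [semiconj1 b w j, fg_zpow hb.1 hw.1]

include hb hw in
lemma conj_w (j : ℤ) : w * (w * b) ^ j = (w * b) ^ (-j) * w := by
  rw [show (w * b) ^ j = (b * w) ^ (-j) by rw [fg_zpow hb.1 hw.1, neg_neg],
    semiconj1 w b (-j)]

include hb hw in
lemma c_bs : (w * b) (b s) = w s := by
  rw [Equiv.Perm.mul_apply, hb.1]

include hb hw hs in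
/-- The core "parity" lemma: `b s` is not in the `⟨w*b⟩`-orbit of `s`. -/
lemma core_orbit : ∀ j : ℤ, ((w * b) ^ j) s ≠ b s := by
  intro j hj
  rcases Int.even_or_odd j with ⟨i, hi⟩ | ⟨i, hi⟩
  · have hfix : b (((w * b) ^ i) s) = ((w * b) ^ i) s := by
      calc b (((w * b) ^ i) s) = (b * (w * b) ^ i) s := (Equiv.Perm.mul_apply _ _ _).symm
        _ = (((w * b) ^ (-i)) * b) s := by rw [conj_b hb hw]
        _ = ((w * b) ^ (-i)) (b s) := Equiv.Perm.mul_apply _ _ _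
        _ = ((w * b) ^ (-i)) (((w * b) ^ j) s) := by rw [hj]
        _ = (((w * b) ^ (-i)) * ((w * b) ^ j)) s := (Equiv.Perm.mul_apply _ _ _).symm
        _ = ((w * b) ^ i) s := by rw [← zpow_add, show -i + j = i by omega]
    exact pair_ne hb (c_zpow_mem hb hw hs i) hfix
  · have hkey : (w * b) ^ (-(i + 1)) * (w * b) = (w * b) ^ (-i) := by
      rw [← zpow_add_one, show -(i + 1) + 1 = -i by ring]
    have hfix : w (((w * b) ^ (i + 1)) s) = ((w * b) ^ (i + 1)) s := by
      calc w (((w * b) ^ (i + 1)) s) = (w * (w * b) ^ (i + 1)) s :=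
            (Equiv.Perm.mul_apply _ _ _).symm
        _ = (((w * b) ^ (-(i + 1))) * w) s := by rw [conj_w hb hw]
        _ = ((w * b) ^ (-(i + 1))) (w s) := Equiv.Perm.mul_apply _ _ _
        _ = ((w * b) ^ (-(i + 1))) ((w * b) (b s)) := by rw [c_bs hb hw]
        _ = ((w * b) ^ (-(i + 1)) * (w * b)) (b s) := (Equiv.Perm.mul_apply _ _ _).symm
        _ = ((w * b) ^ (-i)) (b s) := by rw [hkey]
        _ = ((w * b) ^ (-i)) (((w * b) ^ j) s) := by rw [hj]
        _ = (((w * b) ^ (-i)) * ((w * b) ^ j)) s := (Equiv.Perm.mul_apply _ _ _).symm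
        _ = ((w * b) ^ (i + 1)) s := by rw [← zpow_add, show -i + j = i + 1 by omega]
    exact pair_ne hw (c_zpow_mem hb hw hs (i + 1)) hfix

end Faces

section Twisted
variable (hb : IsPairing S b) (hw : IsPairing S w) (he : IsPairing S e)
  (hs : s ∈ S) (htw : IsTwisted b w s (e s))

include hb he hs in
lemma pm_bs_ne_s : b s ≠ s := pair_ne hb hs

include hb hw he hs htw in
lemma leaf_b : b s ≠ e s := by
  obtain ⟨k, hk⟩ := htw.2
  exact fun h => core_orbit hb hw hs k (hk.symm.trans h.symm)

include hb hw he hs htw in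
lemma leaf_w : w s ≠ e s := by
  obtain ⟨k, hk⟩ := htw.2
  intro h
  have h1 : (w * b) (b s) = ((w * b) ^ k) s := by rw [c_bs hb hw, h, hk]
  have h3 := congrArg (⇑(w * b)⁻¹) h1
  rw [Equiv.Perm.inv_apply_self] at h3
  refine core_orbit hb hw hs (k - 1) ?_
  rw [show k - 1 = (-1 : ℤ) + k by ring, zpow_add, Equiv.Perm.mul_apply, zpow_neg_one,
    ← h3]

include hb hw he hs htw in
lemma crux_ws : SameFace (removeP b s (e s)) (removeP w s (e s)) (w s) (b s) := by
  obtain ⟨k, hk⟩ := htw.2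
  have htS : e s ∈ S := pair_mem he hs
  have hst : s ≠ e s := (pair_ne he hs).symm
  have hbs : b s ≠ s := pair_ne hb hs
  have hbt : b (e s) ≠ e s := pair_ne hb htS
  have hws : w s ≠ s := pair_ne hw hs
  have hwt : w (e s) ≠ e s := pair_ne hw htS
  have hbst : b s ≠ e s := leaf_b hb hw he hs htw
  have hwst : w s ≠ e s := leaf_w hb hw he hs htw
  have hb'inv : ∀ a, removeP b s (e s) (removeP b s (e s) a) = a :=
    removeP_invol hst hbs hbt hbst hb.1
  have hw'inv : ∀ a, removeP w s (e s) (removeP w s (e s) a) = a :=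
    removeP_invol hst hws hwt hwst hw.1
  obtain ⟨d, hd0, hdfix⟩ := exists_period (c_mem hb hw) (pair_mem hb hs)
  have hstep : ∀ x, (∃ n : ℕ, ((w * b) ^ n) x = b s) → x ≠ b s → x ≠ b (e s) →
      SameFace (removeP b s (e s)) (removeP w s (e s)) x ((w * b) x) := by
    rintro x ⟨n, hn⟩ hx1 hx2
    have hxs : x ≠ s := by
      rintro rfl
      exact core_orbit hb hw hs (n : ℤ) (by rw [zpow_natCast]; exact hn)
    have hxt : x ≠ e s := by
      rintro rfl
      refine core_orbit hb hw hs ((n : ℤ) + k) ?_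
      rw [zpow_add, Equiv.Perm.mul_apply, zpow_natCast, ← hk]
      exact hn
    have hbxs : b x ≠ s := fun h => hx1 (by rw [← hb.1 x, h])
    have hbxt : b x ≠ e s := fun h => hx2 (by rw [← hb.1 x, h])
    have hbxws : b x ≠ w s := by
      intro h
      have hc1 : ((w * b) ^ (-1 : ℤ)) s = b (w s) := by
        rw [zpow_neg_one, inv_gf hb.1 hw.1, Equiv.Perm.mul_apply]
      have hx : x = ((w * b) ^ (-1 : ℤ)) s := by rw [hc1, ← h, hb.1]
      refine core_orbit hb hw hs ((n : ℤ) + (-1)) ?_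
      rw [zpow_add, Equiv.Perm.mul_apply, zpow_natCast, ← hx]
      exact hn
    have hbxwt : b x ≠ w (e s) := by
      intro h
      have hbwt : b (w (e s)) = ((w * b) ^ (k - 1)) s := by
        rw [← Equiv.Perm.mul_apply, ← inv_gf hb.1 hw.1, hk, ← zpow_neg_one,
          ← Equiv.Perm.mul_apply, ← zpow_add, show (-1 : ℤ) + k = k - 1 by ring]
      have hx : x = ((w * b) ^ (k - 1)) s := by rw [← hb.1 x, h, hbwt]
      refine core_orbit hb hw hs ((n : ℤ) + (k - 1)) ?_
      rw [zpow_add, Equiv.Perm.mul_apply, zpow_natCast, ← hx]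
      exact hn
    have hb'x : removeP b s (e s) x = b x := removeP_other hb.1 x hxs hxt hx1 hx2
    have hw'bx : removeP w s (e s) (b x) = w (b x) :=
      removeP_other hw.1 (b x) hbxs hbxt hbxws hbxwt
    have s1 := sf_step_f (f := removeP b s (e s)) (g := removeP w s (e s)) x
    rw [hb'x] at s1
    have s2 := sf_step_g (f := removeP b s (e s)) (g := removeP w s (e s)) hb'inv (b x)
    rw [hw'bx] at s2
    rw [Equiv.Perm.mul_apply]
    exact sf_trans hb'inv hw'inv s1 s2
  have hreach : ((w * b) ^ (d - 1)) (w s) = b s := by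
    rw [← c_bs hb hw, ← Equiv.Perm.mul_apply, ← pow_succ, show d - 1 + 1 = d by omega]
    exact hdfix
  have h21 : SameFace (removeP b s (e s)) (removeP w s (e s)) (b (e s)) (b s) := by
    have h := sf_step_f (f := removeP b s (e s)) (g := removeP w s (e s)) (b (e s))
    rwa [removeP_ft hst hbs hbst hb.1] at h
  exact cycle_connect (fun x => sf_refl x)
    (fun h1 h2 => sf_trans hb'inv hw'inv h1 h2) h21 hstep (d - 1) (w s) hreach

include hb hw he hs htw in
lemma caseA_faces : ∀ x, SameFace b w s x → x ≠ s → x ≠ e s →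
    SameFace (removeP b s (e s)) (removeP w s (e s)) (b s) x := by
  obtain ⟨k, hk⟩ := htw.2
  have htS : e s ∈ S := pair_mem he hs
  have hst : s ≠ e s := (pair_ne he hs).symm
  have hbs : b s ≠ s := pair_ne hb hs
  have hbt : b (e s) ≠ e s := pair_ne hb htS
  have hws : w s ≠ s := pair_ne hw hs
  have hwt : w (e s) ≠ e s := pair_ne hw htS
  have hbst : b s ≠ e s := leaf_b hb hw he hs htw
  have hwst : w s ≠ e s := leaf_w hb hw he hs htw
  have hb'inv : ∀ a, removeP b s (e s) (removeP b s (e s) a) = a :=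
    removeP_invol hst hbs hbt hbst hb.1
  have hw'inv : ∀ a, removeP w s (e s) (removeP w s (e s) a) = a :=
    removeP_invol hst hws hwt hwst hw.1
  have hcrux := crux_ws hb hw he hs htw
  set Q : α → Prop :=
    fun z => (z = s ∨ z = e s) ∨
      SameFace (removeP b s (e s)) (removeP w s (e s)) (b s) z with hQdef
  have hsq : ∀ f₀ ∈ ({b, w} : Set (Perm α)), ∀ z, f₀ (f₀ z) = z := by
    intro f₀ hf₀ z
    rcases Set.mem_insert_iff.mp hf₀ with hf | hf
    · rw [hf]; exact hb.1 z
    · rw [Set.mem_singleton_iff] at hf; rw [hf]; exact hw.1 z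
  have hAb : ∀ z, Q z → Q (b z) := by
    intro z hz
    by_cases hzs : z = s
    · rw [hzs]; exact Or.inr (sf_refl _)
    by_cases hzt : z = e s
    · rw [hzt]
      refine Or.inr ?_
      have h1 := sf_step_f (f := removeP b s (e s)) (g := removeP w s (e s)) (b s)
      rwa [removeP_fs hst hbs hbt hbst hb.1] at h1
    have hz' : SameFace (removeP b s (e s)) (removeP w s (e s)) (b s) z := by
      rcases hz with (h | h) | h
      · exact absurd h hzs
      · exact absurd h hzt
      · exact h
    by_cases h1 : z = b s
    · exact Or.inl (Or.inl (by rw [h1, hb.1]))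
    by_cases h2 : z = b (e s)
    · exact Or.inl (Or.inr (by rw [h2, hb.1]))
    · refine Or.inr (sf_trans hb'inv hw'inv hz' ?_)
      have h3 := sf_step_f (f := removeP b s (e s)) (g := removeP w s (e s)) z
      rwa [removeP_other hb.1 z hzs hzt h1 h2] at h3
  have hAw : ∀ z, Q z → Q (w z) := by
    intro z hz
    by_cases hzs : z = s
    · rw [hzs]; exact Or.inr (sf_symm hb'inv hw'inv hcrux)
    by_cases hzt : z = e s
    · rw [hzt]
      refine Or.inr (sf_trans hb'inv hw'inv (sf_symm hb'inv hw'inv hcrux) ?_)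
      have h1 := sf_step_g (f := removeP b s (e s)) (g := removeP w s (e s)) hb'inv (w s)
      rwa [removeP_fs hst hws hwt hwst hw.1] at h1
    have hz' : SameFace (removeP b s (e s)) (removeP w s (e s)) (b s) z := by
      rcases hz with (h | h) | h
      · exact absurd h hzs
      · exact absurd h hzt
      · exact h
    by_cases h1 : z = w s
    · exact Or.inl (Or.inl (by rw [h1, hw.1]))
    by_cases h2 : z = w (e s)
    · exact Or.inl (Or.inr (by rw [h2, hw.1]))
    · refine Or.inr (sf_trans hb'inv hw'inv hz' ?_)
      have h3 := sf_step_g (f := removeP b s (e s)) (g := removeP w s (e s)) hb'inv z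
      rwa [removeP_other hw.1 z hzs hzt h1 h2] at h3
  have hA : ∀ f₀ ∈ ({b, w} : Set (Perm α)), ∀ z, Q z → Q (f₀ z) := by
    intro f₀ hf₀ z hz
    rcases Set.mem_insert_iff.mp hf₀ with hf | hf
    · rw [hf]; exact hAb z hz
    · rw [Set.mem_singleton_iff] at hf; rw [hf]; exact hAw z hz
  intro x hx hxs hxt
  obtain ⟨h, hh, hhx⟩ := (sameFace_iff hb.1 hw.1).mp hx
  have hQiff := orbit_Q hsq hA h hh s
  rw [hhx] at hQiff
  have hQx : Q x := hQiff.mp (Or.inl (Or.inl rfl))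
  rcases hQx with (h1 | h1) | h1
  · exact absurd h1 hxs
  · exact absurd h1 hxt
  · exact h1

include hb hw he hs htw in
lemma mono_faces : ∀ x y,
    SameFace (removeP b s (e s)) (removeP w s (e s)) x y → SameFace b w x y := by
  obtain ⟨k, hk⟩ := htw.2
  have htS : e s ∈ S := pair_mem he hs
  have hst : s ≠ e s := (pair_ne he hs).symm
  have hbs : b s ≠ s := pair_ne hb hs
  have hbt : b (e s) ≠ e s := pair_ne hb htS
  have hws : w s ≠ s := pair_ne hw hs
  have hwt : w (e s) ≠ e s := pair_ne hw htS
  have hbst : b s ≠ e s := leaf_b hb hw he hs htw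
  have hwst : w s ≠ e s := leaf_w hb hw he hs htw
  have hb'inv : ∀ a, removeP b s (e s) (removeP b s (e s) a) = a :=
    removeP_invol hst hbs hbt hbst hb.1
  have hw'inv : ∀ a, removeP w s (e s) (removeP w s (e s) a) = a :=
    removeP_invol hst hws hwt hwst hw.1
  have hbt_eq : b (e s) = ((w * b) ^ (-k)) (b s) := by
    rw [hk, ← Equiv.Perm.mul_apply, conj_b hb hw, Equiv.Perm.mul_apply]
  have hwt_eq : w (e s) = ((w * b) ^ (-k)) (w s) := by
    rw [hk, ← Equiv.Perm.mul_apply, conj_w hb hw, Equiv.Perm.mul_apply]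
  have hcmem : (w * b) ∈ Subgroup.closure ({b, w} : Set (Perm α)) :=
    mul_mem mem_closure_g mem_closure_f
  have hyp : ∀ f' ∈ ({removeP b s (e s), removeP w s (e s)} : Set (Perm α)), ∀ z,
      ∃ h ∈ Subgroup.closure ({b, w} : Set (Perm α)), h z = f' z := by
    intro f' hf' z
    rcases Set.mem_insert_iff.mp hf' with hf | hf
    · rw [hf]
      by_cases hzs : z = s
      · rw [hzs, removeP_fst hst hbt]; exact ⟨1, one_mem _, rfl⟩
      by_cases hzt : z = e s
      · rw [hzt, removeP_snd hst hbt hb.1]; exact ⟨1, one_mem _, rfl⟩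
      by_cases h1 : z = b s
      · rw [h1, removeP_fs hst hbs hbt hbst hb.1]
        exact ⟨(w * b) ^ (-k), zpow_mem hcmem _, hbt_eq.symm⟩
      by_cases h2 : z = b (e s)
      · rw [h2, removeP_ft hst hbs hbst hb.1]
        refine ⟨(w * b) ^ k, zpow_mem hcmem _, ?_⟩
        rw [hbt_eq, ← Equiv.Perm.mul_apply, ← zpow_add, show k + -k = 0 by ring,
          zpow_zero, Equiv.Perm.one_apply]
      · rw [removeP_other hb.1 z hzs hzt h1 h2]
        exact ⟨b, mem_closure_f, rfl⟩
    · rw [Set.mem_singleton_iff] at hf; rw [hf]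
      by_cases hzs : z = s
      · rw [hzs, removeP_fst hst hwt]; exact ⟨1, one_mem _, rfl⟩
      by_cases hzt : z = e s
      · rw [hzt, removeP_snd hst hwt hw.1]; exact ⟨1, one_mem _, rfl⟩
      by_cases h1 : z = w s
      · rw [h1, removeP_fs hst hws hwt hwst hw.1]
        exact ⟨(w * b) ^ (-k), zpow_mem hcmem _, hwt_eq.symm⟩
      by_cases h2 : z = w (e s)
      · rw [h2, removeP_ft hst hws hwst hw.1]
        refine ⟨(w * b) ^ k, zpow_mem hcmem _, ?_⟩
        rw [hwt_eq, ← Equiv.Perm.mul_apply, ← zpow_add, show k + -k = 0 by ring,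
          zpow_zero, Equiv.Perm.one_apply]
      · rw [removeP_other hw.1 z hzs hzt h1 h2]
        exact ⟨w, mem_closure_g, rfl⟩
  intro x y hxy
  obtain ⟨h', hh', rfl⟩ := (sameFace_iff hb'inv hw'inv).mp hxy
  exact (sameFace_iff hb.1 hw.1).mpr (orbit_mono hyp h' hh' x)

include hb hw he hs htw in
lemma untouched_faces : ∀ x y, ¬ SameFace b w s x → SameFace b w x y →
    SameFace (removeP b s (e s)) (removeP w s (e s)) x y := by
  have htS : e s ∈ S := pair_mem he hs
  have hst : s ≠ e s := (pair_ne he hs).symm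
  have hbs : b s ≠ s := pair_ne hb hs
  have hbt : b (e s) ≠ e s := pair_ne hb htS
  have hws : w s ≠ s := pair_ne hw hs
  have hwt : w (e s) ≠ e s := pair_ne hw htS
  have hbst : b s ≠ e s := leaf_b hb hw he hs htw
  have hwst : w s ≠ e s := leaf_w hb hw he hs htw
  have hb'inv : ∀ a, removeP b s (e s) (removeP b s (e s) a) = a :=
    removeP_invol hst hbs hbt hbst hb.1
  have hw'inv : ∀ a, removeP w s (e s) (removeP w s (e s) a) = a :=
    removeP_invol hst hws hwt hwst hw.1
  have hyp : ∀ f₀ ∈ ({b, w} : Set (Perm α)), ∀ z,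
      ¬(∃ h ∈ Subgroup.closure ({b, w} : Set (Perm α)), h s = z) →
      ∃ h' ∈ Subgroup.closure
        ({removeP b s (e s), removeP w s (e s)} : Set (Perm α)), h' z = f₀ z := by
    intro f₀ hf₀ z hz
    have hz' : ¬ SameFace b w s z := fun hc => hz ((sameFace_iff hb.1 hw.1).mp hc)
    have hzs : z ≠ s := fun h => hz' (by rw [h]; exact sf_refl s)
    have hzt : z ≠ e s := fun h => hz' (by rw [h]; exact htw.1)
    rcases Set.mem_insert_iff.mp hf₀ with hf | hf
    · rw [hf]
      have h1 : z ≠ b s := fun h => hz' (by rw [h]; exact sf_step_f s)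
      have h2 : z ≠ b (e s) :=
        fun h => hz' (by rw [h]; exact sf_trans hb.1 hw.1 htw.1 (sf_step_f (e s)))
      exact ⟨removeP b s (e s), mem_closure_f, removeP_other hb.1 z hzs hzt h1 h2⟩
    · rw [Set.mem_singleton_iff] at hf; rw [hf]
      have h1 : z ≠ w s := fun h => hz' (by rw [h]; exact sf_step_g hb.1 s)
      have h2 : z ≠ w (e s) :=
        fun h => hz' (by rw [h]; exact sf_trans hb.1 hw.1 htw.1 (sf_step_g hb.1 (e s)))
      exact ⟨removeP w s (e s), mem_closure_g, removeP_other hw.1 z hzs hzt h1 h2⟩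
  intro x y hnx hxy
  obtain ⟨h, hh, rfl⟩ := (sameFace_iff hb.1 hw.1).mp hxy
  exact (sameFace_iff hb'inv hw'inv).mpr
    (orbit_untouched hyp h hh x fun hc => hnx ((sameFace_iff hb.1 hw.1).mpr hc))

include hb hw he hs htw in
lemma faces_eq :
    numFaces (S \ {s, e s}) (removeP b s (e s)) (removeP w s (e s)) = numFaces S b w := by
  have htS : e s ∈ S := pair_mem he hs
  have hst : s ≠ e s := (pair_ne he hs).symm
  have hbs : b s ≠ s := pair_ne hb hs
  have hbt : b (e s) ≠ e s := pair_ne hb htS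
  have hws : w s ≠ s := pair_ne hw hs
  have hwt : w (e s) ≠ e s := pair_ne hw htS
  have hbst : b s ≠ e s := leaf_b hb hw he hs htw
  have hwst : w s ≠ e s := leaf_w hb hw he hs htw
  have hb'inv : ∀ a, removeP b s (e s) (removeP b s (e s) a) = a :=
    removeP_invol hst hbs hbt hbst hb.1
  have hw'inv : ∀ a, removeP w s (e s) (removeP w s (e s) a) = a :=
    removeP_invol hst hws hwt hwst hw.1
  show ((S \ {s, e s}).image fun x => (S \ {s, e s}).filter
      (SameFace (removeP b s (e s)) (removeP w s (e s)) x)).card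
    = (S.image fun x => S.filter (SameFace b w x)).card
  refine card_classes_eq (R := SameFace b w)
    (R' := SameFace (removeP b s (e s)) (removeP w s (e s)))
    hs htS (fun x => sf_refl x) (fun h => sf_symm hb.1 hw.1 h)
    (fun h1 h2 => sf_trans hb.1 hw.1 h1 h2) (fun x => sf_refl x)
    (fun h => sf_symm hb'inv hw'inv h) (fun h1 h2 => sf_trans hb'inv hw'inv h1 h2)
    (pair_mem hb hs) hbs hbst (sf_step_f s) htw.1 ?_
  intro x hx y hy
  rw [Finset.mem_sdiff, Finset.mem_insert, Finset.mem_singleton] at hx hy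
  constructor
  · exact mono_faces hb hw he hs htw x y
  · intro hxy
    by_cases hsx : SameFace b w s x
    · have hsy : SameFace b w s y := sf_trans hb.1 hw.1 hsx hxy
      exact sf_trans hb'inv hw'inv
        (sf_symm hb'inv hw'inv (caseA_faces hb hw he hs htw x hsx
          (fun h => hx.2 (Or.inl h)) (fun h => hx.2 (Or.inr h))))
        (caseA_faces hb hw he hs htw y hsy
          (fun h => hy.2 (Or.inl h)) (fun h => hy.2 (Or.inr h)))
    · exact untouched_faces hb hw he hs htw x y hsx hxy

end Twisted

section Vertices
variable (hb : IsPairing S b) (he : IsPairing S e) (hs : s ∈ S) (hbst : b s ≠ e s)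

include hb he hs hbst in
lemma vert_eq :
    numFaces (S \ {s, e s}) (removeP b s (e s)) (removeP e s (e s)) = numFaces S b e := by
  have htS : e s ∈ S := pair_mem he hs
  have hst : s ≠ e s := (pair_ne he hs).symm
  have hbs : b s ≠ s := pair_ne hb hs
  have hbt : b (e s) ≠ e s := pair_ne hb htS
  have hb'inv : ∀ a, removeP b s (e s) (removeP b s (e s) a) = a :=
    removeP_invol hst hbs hbt hbst hb.1
  have he'inv : ∀ a, removeP e s (e s) (removeP e s (e s) a) = a :=
    removeP_adj_invol hst he.1 rfl
  have hstt : SameFace b e s (e s) := sf_step_g hb.1 s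
  -- mono
  have hyp_mono : ∀ f' ∈ ({removeP b s (e s), removeP e s (e s)} : Set (Perm α)), ∀ z,
      ∃ h ∈ Subgroup.closure ({b, e} : Set (Perm α)), h z = f' z := by
    intro f' hf' z
    rcases Set.mem_insert_iff.mp hf' with hf | hf
    · rw [hf]
      by_cases hzs : z = s
      · rw [hzs, removeP_fst hst hbt]; exact ⟨1, one_mem _, rfl⟩
      by_cases hzt : z = e s
      · rw [hzt, removeP_snd hst hbt hb.1]; exact ⟨1, one_mem _, rfl⟩
      by_cases h1 : z = b s
      · rw [h1, removeP_fs hst hbs hbt hbst hb.1]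
        refine ⟨b * e * b, mul_mem (mul_mem mem_closure_f mem_closure_g) mem_closure_f, ?_⟩
        rw [Equiv.Perm.mul_apply, Equiv.Perm.mul_apply, hb.1]
      by_cases h2 : z = b (e s)
      · rw [h2, removeP_ft hst hbs hbst hb.1]
        refine ⟨b * e * b, mul_mem (mul_mem mem_closure_f mem_closure_g) mem_closure_f, ?_⟩
        rw [Equiv.Perm.mul_apply, Equiv.Perm.mul_apply, hb.1, he.1]
      · rw [removeP_other hb.1 z hzs hzt h1 h2]
        exact ⟨b, mem_closure_f, rfl⟩
    · rw [Set.mem_singleton_iff] at hf; rw [hf]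
      by_cases hzs : z = s
      · rw [hzs, removeP_adj_fst he.1 rfl]; exact ⟨1, one_mem _, rfl⟩
      by_cases hzt : z = e s
      · rw [hzt, removeP_adj_snd he.1 rfl]; exact ⟨1, one_mem _, rfl⟩
      · rw [removeP_adj_other he.1 rfl z hzs hzt]
        exact ⟨e, mem_closure_g, rfl⟩
  have hmono : ∀ x y, SameFace (removeP b s (e s)) (removeP e s (e s)) x y →
      SameFace b e x y := by
    intro x y hxy
    obtain ⟨h', hh', rfl⟩ := (sameFace_iff hb'inv he'inv).mp hxy
    exact (sameFace_iff hb.1 he.1).mpr (orbit_mono hyp_mono h' hh' x)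
  -- case A
  have hsq : ∀ f₀ ∈ ({b, e} : Set (Perm α)), ∀ z, f₀ (f₀ z) = z := by
    intro f₀ hf₀ z
    rcases Set.mem_insert_iff.mp hf₀ with hf | hf
    · rw [hf]; exact hb.1 z
    · rw [Set.mem_singleton_iff] at hf; rw [hf]; exact he.1 z
  have hAb : ∀ z, ((z = s ∨ z = e s) ∨
        SameFace (removeP b s (e s)) (removeP e s (e s)) (b s) z) →
      ((b z = s ∨ b z = e s) ∨
        SameFace (removeP b s (e s)) (removeP e s (e s)) (b s) (b z)) := by
    intro z hz
    by_cases hzs : z = s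
    · rw [hzs]; exact Or.inr (sf_refl _)
    by_cases hzt : z = e s
    · rw [hzt]
      refine Or.inr ?_
      have h1 := sf_step_f (f := removeP b s (e s)) (g := removeP e s (e s)) (b s)
      rwa [removeP_fs hst hbs hbt hbst hb.1] at h1
    have hz' : SameFace (removeP b s (e s)) (removeP e s (e s)) (b s) z := by
      rcases hz with (h | h) | h
      · exact absurd h hzs
      · exact absurd h hzt
      · exact h
    by_cases h1 : z = b s
    · exact Or.inl (Or.inl (by rw [h1, hb.1]))
    by_cases h2 : z = b (e s)
    · exact Or.inl (Or.inr (by rw [h2, hb.1]))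
    · refine Or.inr (sf_trans hb'inv he'inv hz' ?_)
      have h3 := sf_step_f (f := removeP b s (e s)) (g := removeP e s (e s)) z
      rwa [removeP_other hb.1 z hzs hzt h1 h2] at h3
  have hAe : ∀ z, ((z = s ∨ z = e s) ∨
        SameFace (removeP b s (e s)) (removeP e s (e s)) (b s) z) →
      ((e z = s ∨ e z = e s) ∨
        SameFace (removeP b s (e s)) (removeP e s (e s)) (b s) (e z)) := by
    intro z hz
    by_cases hzs : z = s
    · rw [hzs]; exact Or.inl (Or.inr rfl)
    by_cases hzt : z = e s
    · rw [hzt]; exact Or.inl (Or.inl (he.1 s))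
    have hz' : SameFace (removeP b s (e s)) (removeP e s (e s)) (b s) z := by
      rcases hz with (h | h) | h
      · exact absurd h hzs
      · exact absurd h hzt
      · exact h
    refine Or.inr (sf_trans hb'inv he'inv hz' ?_)
    have h3 := sf_step_g (f := removeP b s (e s)) (g := removeP e s (e s)) hb'inv z
    rwa [removeP_adj_other he.1 rfl z hzs hzt] at h3
  have hcaseA : ∀ x, SameFace b e s x → x ≠ s → x ≠ e s →
      SameFace (removeP b s (e s)) (removeP e s (e s)) (b s) x := by
    have hA : ∀ f₀ ∈ ({b, e} : Set (Perm α)), ∀ z,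
        ((z = s ∨ z = e s) ∨
          SameFace (removeP b s (e s)) (removeP e s (e s)) (b s) z) →
        ((f₀ z = s ∨ f₀ z = e s) ∨
          SameFace (removeP b s (e s)) (removeP e s (e s)) (b s) (f₀ z)) := by
      intro f₀ hf₀ z hz
      rcases Set.mem_insert_iff.mp hf₀ with hf | hf
      · rw [hf]; exact hAb z hz
      · rw [Set.mem_singleton_iff] at hf; rw [hf]; exact hAe z hz
    intro x hx hxs hxt
    obtain ⟨h, hh, hhx⟩ := (sameFace_iff hb.1 he.1).mp hx
    have hQiff := orbit_Q (Q := fun z => (z = s ∨ z = e s) ∨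
      SameFace (removeP b s (e s)) (removeP e s (e s)) (b s) z) hsq hA h hh s
    rw [hhx] at hQiff
    rcases hQiff.mp (Or.inl (Or.inl rfl)) with (h1 | h1) | h1
    · exact absurd h1 hxs
    · exact absurd h1 hxt
    · exact h1
  -- untouched
  have huntouched : ∀ x y, ¬ SameFace b e s x → SameFace b e x y →
      SameFace (removeP b s (e s)) (removeP e s (e s)) x y := by
    have hyp : ∀ f₀ ∈ ({b, e} : Set (Perm α)), ∀ z,
        ¬(∃ h ∈ Subgroup.closure ({b, e} : Set (Perm α)), h s = z) →
        ∃ h' ∈ Subgroup.closure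
          ({removeP b s (e s), removeP e s (e s)} : Set (Perm α)), h' z = f₀ z := by
      intro f₀ hf₀ z hz
      have hz' : ¬ SameFace b e s z := fun hc => hz ((sameFace_iff hb.1 he.1).mp hc)
      have hzs : z ≠ s := fun h => hz' (by rw [h]; exact sf_refl s)
      have hzt : z ≠ e s := fun h => hz' (by rw [h]; exact hstt)
      rcases Set.mem_insert_iff.mp hf₀ with hf | hf
      · rw [hf]
        have h1 : z ≠ b s := fun h => hz' (by rw [h]; exact sf_step_f s)
        have h2 : z ≠ b (e s) :=
          fun h => hz' (by rw [h]; exact sf_trans hb.1 he.1 hstt (sf_step_f (e s)))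
        exact ⟨removeP b s (e s), mem_closure_f, removeP_other hb.1 z hzs hzt h1 h2⟩
      · rw [Set.mem_singleton_iff] at hf; rw [hf]
        exact ⟨removeP e s (e s), mem_closure_g, removeP_adj_other he.1 rfl z hzs hzt⟩
    intro x y hnx hxy
    obtain ⟨h, hh, rfl⟩ := (sameFace_iff hb.1 he.1).mp hxy
    exact (sameFace_iff hb'inv he'inv).mpr
      (orbit_untouched hyp h hh x fun hc => hnx ((sameFace_iff hb.1 he.1).mpr hc))
  -- conclude
  show ((S \ {s, e s}).image fun x => (S \ {s, e s}).filter
      (SameFace (removeP b s (e s)) (removeP e s (e s)) x)).card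
    = (S.image fun x => S.filter (SameFace b e x)).card
  refine card_classes_eq (R := SameFace b e)
    (R' := SameFace (removeP b s (e s)) (removeP e s (e s)))
    hs htS (fun x => sf_refl x) (fun h => sf_symm hb.1 he.1 h)
    (fun h1 h2 => sf_trans hb.1 he.1 h1 h2) (fun x => sf_refl x)
    (fun h => sf_symm hb'inv he'inv h) (fun h1 h2 => sf_trans hb'inv he'inv h1 h2)
    (pair_mem hb hs) hbs hbst (sf_step_f s) hstt ?_
  intro x hx y hy
  rw [Finset.mem_sdiff, Finset.mem_insert, Finset.mem_singleton] at hx hy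
  constructor
  · exact hmono x y
  · intro hxy
    by_cases hsx : SameFace b e s x
    · have hsy : SameFace b e s y := sf_trans hb.1 he.1 hsx hxy
      exact sf_trans hb'inv he'inv
        (sf_symm hb'inv he'inv (hcaseA x hsx
          (fun h => hx.2 (Or.inl h)) (fun h => hx.2 (Or.inr h))))
        (hcaseA y hsy (fun h => hy.2 (Or.inl h)) (fun h => hy.2 (Or.inr h)))
    · exact huntouched x y hsx hxy

end Vertices

section Components

lemma sc_def {b w e : Perm α} {x y : α} : SameComponent b w e x y ↔
    ∃ g ∈ Subgroup.closure ({b, w, e} : Set (Perm α)), g x = y := Iff.rfl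

lemma sc_refl (b w e : Perm α) (x : α) : SameComponent b w e x x :=
  ⟨1, one_mem _, rfl⟩

lemma sc_symm {b w e : Perm α} {x y : α} (h : SameComponent b w e x y) :
    SameComponent b w e y x := by
  obtain ⟨h0, hh0, rfl⟩ := h
  exact ⟨h0⁻¹, inv_mem hh0, Equiv.Perm.inv_apply_self h0 x⟩

lemma sc_trans {b w e : Perm α} {x y z : α} (h1 : SameComponent b w e x y)
    (h2 : SameComponent b w e y z) : SameComponent b w e x z := by
  obtain ⟨g1, hg1, rfl⟩ := h1
  obtain ⟨g2, hg2, rfl⟩ := h2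
  exact ⟨g2 * g1, mul_mem hg2 hg1, Equiv.Perm.mul_apply g2 g1 x⟩

variable (hb : IsPairing S b) (hw : IsPairing S w) (he : IsPairing S e)
  (hs : s ∈ S) (htw : IsTwisted b w s (e s))

include hb hw he hs htw in
lemma comp_eq :
    numComponents (S \ {s, e s}) (removeP b s (e s)) (removeP w s (e s))
      (removeP e s (e s)) = numComponents S b w e := by
  have htS : e s ∈ S := pair_mem he hs
  have hst : s ≠ e s := (pair_ne he hs).symm
  have hbs : b s ≠ s := pair_ne hb hs
  have hbt : b (e s) ≠ e s := pair_ne hb htS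
  have hws : w s ≠ s := pair_ne hw hs
  have hwt : w (e s) ≠ e s := pair_ne hw htS
  have hbst : b s ≠ e s := leaf_b hb hw he hs htw
  have hwst : w s ≠ e s := leaf_w hb hw he hs htw
  have hb'inv : ∀ a, removeP b s (e s) (removeP b s (e s) a) = a :=
    removeP_invol hst hbs hbt hbst hb.1
  have hw'inv : ∀ a, removeP w s (e s) (removeP w s (e s) a) = a :=
    removeP_invol hst hws hwt hwst hw.1
  have he'inv : ∀ a, removeP e s (e s) (removeP e s (e s) a) = a :=
    removeP_adj_invol hst he.1 rfl
  have hmb : b ∈ Subgroup.closure ({b, w, e} : Set (Perm α)) :=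
    Subgroup.subset_closure (by simp)
  have hmw : w ∈ Subgroup.closure ({b, w, e} : Set (Perm α)) :=
    Subgroup.subset_closure (by simp)
  have hme : e ∈ Subgroup.closure ({b, w, e} : Set (Perm α)) :=
    Subgroup.subset_closure (by simp)
  have hmb' : removeP b s (e s) ∈ Subgroup.closure
      ({removeP b s (e s), removeP w s (e s), removeP e s (e s)} : Set (Perm α)) :=
    Subgroup.subset_closure (by simp)
  have hmw' : removeP w s (e s) ∈ Subgroup.closure
      ({removeP b s (e s), removeP w s (e s), removeP e s (e s)} : Set (Perm α)) :=
    Subgroup.subset_closure (by simp)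
  have hme' : removeP e s (e s) ∈ Subgroup.closure
      ({removeP b s (e s), removeP w s (e s), removeP e s (e s)} : Set (Perm α)) :=
    Subgroup.subset_closure (by simp)
  -- the crux transferred to components
  have hcws : SameComponent (removeP b s (e s)) (removeP w s (e s)) (removeP e s (e s))
      (w s) (b s) := by
    obtain ⟨h0, hh0, hx⟩ := (sameFace_iff hb'inv hw'inv).mp (crux_ws hb hw he hs htw)
    refine ⟨h0, Subgroup.closure_mono ?_ hh0, hx⟩
    intro x hx0
    simp only [Set.mem_insert_iff, Set.mem_singleton_iff] at hx0 ⊢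
    tauto
  -- mono
  have hyp_mono : ∀ f' ∈ ({removeP b s (e s), removeP w s (e s),
      removeP e s (e s)} : Set (Perm α)), ∀ z,
      ∃ h ∈ Subgroup.closure ({b, w, e} : Set (Perm α)), h z = f' z := by
    intro f' hf' z
    rcases Set.mem_insert_iff.mp hf' with hf | hf'2
    · rw [hf]
      by_cases hzs : z = s
      · rw [hzs, removeP_fst hst hbt]; exact ⟨1, one_mem _, rfl⟩
      by_cases hzt : z = e s
      · rw [hzt, removeP_snd hst hbt hb.1]; exact ⟨1, one_mem _, rfl⟩
      by_cases h1 : z = b s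
      · rw [h1, removeP_fs hst hbs hbt hbst hb.1]
        refine ⟨b * e * b, mul_mem (mul_mem hmb hme) hmb, ?_⟩
        rw [Equiv.Perm.mul_apply, Equiv.Perm.mul_apply, hb.1]
      by_cases h2 : z = b (e s)
      · rw [h2, removeP_ft hst hbs hbst hb.1]
        refine ⟨b * e * b, mul_mem (mul_mem hmb hme) hmb, ?_⟩
        rw [Equiv.Perm.mul_apply, Equiv.Perm.mul_apply, hb.1, he.1]
      · rw [removeP_other hb.1 z hzs hzt h1 h2]; exact ⟨b, hmb, rfl⟩
    rcases Set.mem_insert_iff.mp hf'2 with hf | hf'3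
    · rw [hf]
      by_cases hzs : z = s
      · rw [hzs, removeP_fst hst hwt]; exact ⟨1, one_mem _, rfl⟩
      by_cases hzt : z = e s
      · rw [hzt, removeP_snd hst hwt hw.1]; exact ⟨1, one_mem _, rfl⟩
      by_cases h1 : z = w s
      · rw [h1, removeP_fs hst hws hwt hwst hw.1]
        refine ⟨w * e * w, mul_mem (mul_mem hmw hme) hmw, ?_⟩
        rw [Equiv.Perm.mul_apply, Equiv.Perm.mul_apply, hw.1]
      by_cases h2 : z = w (e s)
      · rw [h2, removeP_ft hst hws hwst hw.1]
        refine ⟨w * e * w, mul_mem (mul_mem hmw hme) hmw, ?_⟩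
        rw [Equiv.Perm.mul_apply, Equiv.Perm.mul_apply, hw.1, he.1]
      · rw [removeP_other hw.1 z hzs hzt h1 h2]; exact ⟨w, hmw, rfl⟩
    · rw [Set.mem_singleton_iff] at hf'3; rw [hf'3]
      by_cases hzs : z = s
      · rw [hzs, removeP_adj_fst he.1 rfl]; exact ⟨1, one_mem _, rfl⟩
      by_cases hzt : z = e s
      · rw [hzt, removeP_adj_snd he.1 rfl]; exact ⟨1, one_mem _, rfl⟩
      · rw [removeP_adj_other he.1 rfl z hzs hzt]; exact ⟨e, hme, rfl⟩
  have hmono : ∀ x y, SameComponent (removeP b s (e s)) (removeP w s (e s))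
      (removeP e s (e s)) x y → SameComponent b w e x y := by
    intro x y hxy
    obtain ⟨h', hh', rfl⟩ := hxy
    exact orbit_mono hyp_mono h' hh' x
  -- case A
  have hsq : ∀ f₀ ∈ ({b, w, e} : Set (Perm α)), ∀ z, f₀ (f₀ z) = z := by
    intro f₀ hf₀ z
    rcases Set.mem_insert_iff.mp hf₀ with hf | hf₀2
    · rw [hf]; exact hb.1 z
    rcases Set.mem_insert_iff.mp hf₀2 with hf | hf₀3
    · rw [hf]; exact hw.1 z
    · rw [Set.mem_singleton_iff] at hf₀3; rw [hf₀3]; exact he.1 z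
  have hAb : ∀ z, ((z = s ∨ z = e s) ∨ SameComponent (removeP b s (e s))
        (removeP w s (e s)) (removeP e s (e s)) (b s) z) →
      ((b z = s ∨ b z = e s) ∨ SameComponent (removeP b s (e s))
        (removeP w s (e s)) (removeP e s (e s)) (b s) (b z)) := by
    intro z hz
    by_cases hzs : z = s
    · rw [hzs]; exact Or.inr (sc_refl _ _ _ _)
    by_cases hzt : z = e s
    · rw [hzt]
      exact Or.inr ⟨removeP b s (e s), hmb', removeP_fs hst hbs hbt hbst hb.1⟩
    have hz' : SameComponent (removeP b s (e s)) (removeP w s (e s))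
        (removeP e s (e s)) (b s) z := by
      rcases hz with (h | h) | h
      · exact absurd h hzs
      · exact absurd h hzt
      · exact h
    by_cases h1 : z = b s
    · exact Or.inl (Or.inl (by rw [h1, hb.1]))
    by_cases h2 : z = b (e s)
    · exact Or.inl (Or.inr (by rw [h2, hb.1]))
    · exact Or.inr (sc_trans hz'
        ⟨removeP b s (e s), hmb', removeP_other hb.1 z hzs hzt h1 h2⟩)
  have hAw : ∀ z, ((z = s ∨ z = e s) ∨ SameComponent (removeP b s (e s))
        (removeP w s (e s)) (removeP e s (e s)) (b s) z) →
      ((w z = s ∨ w z = e s) ∨ SameComponent (removeP b s (e s))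
        (removeP w s (e s)) (removeP e s (e s)) (b s) (w z)) := by
    intro z hz
    by_cases hzs : z = s
    · rw [hzs]; exact Or.inr (sc_symm hcws)
    by_cases hzt : z = e s
    · rw [hzt]
      exact Or.inr (sc_trans (sc_symm hcws)
        ⟨removeP w s (e s), hmw', removeP_fs hst hws hwt hwst hw.1⟩)
    have hz' : SameComponent (removeP b s (e s)) (removeP w s (e s))
        (removeP e s (e s)) (b s) z := by
      rcases hz with (h | h) | h
      · exact absurd h hzs
      · exact absurd h hzt
      · exact h
    by_cases h1 : z = w s
    · exact Or.inl (Or.inl (by rw [h1, hw.1]))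
    by_cases h2 : z = w (e s)
    · exact Or.inl (Or.inr (by rw [h2, hw.1]))
    · exact Or.inr (sc_trans hz'
        ⟨removeP w s (e s), hmw', removeP_other hw.1 z hzs hzt h1 h2⟩)
  have hAe : ∀ z, ((z = s ∨ z = e s) ∨ SameComponent (removeP b s (e s))
        (removeP w s (e s)) (removeP e s (e s)) (b s) z) →
      ((e z = s ∨ e z = e s) ∨ SameComponent (removeP b s (e s))
        (removeP w s (e s)) (removeP e s (e s)) (b s) (e z)) := by
    intro z hz
    by_cases hzs : z = s
    · rw [hzs]; exact Or.inl (Or.inr rfl)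
    by_cases hzt : z = e s
    · rw [hzt]; exact Or.inl (Or.inl (he.1 s))
    have hz' : SameComponent (removeP b s (e s)) (removeP w s (e s))
        (removeP e s (e s)) (b s) z := by
      rcases hz with (h | h) | h
      · exact absurd h hzs
      · exact absurd h hzt
      · exact h
    exact Or.inr (sc_trans hz'
      ⟨removeP e s (e s), hme', removeP_adj_other he.1 rfl z hzs hzt⟩)
  have hcaseA : ∀ x, SameComponent b w e s x → x ≠ s → x ≠ e s →
      SameComponent (removeP b s (e s)) (removeP w s (e s)) (removeP e s (e s))
        (b s) x := by
    have hA : ∀ f₀ ∈ ({b, w, e} : Set (Perm α)), ∀ z,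
        ((z = s ∨ z = e s) ∨ SameComponent (removeP b s (e s))
          (removeP w s (e s)) (removeP e s (e s)) (b s) z) →
        ((f₀ z = s ∨ f₀ z = e s) ∨ SameComponent (removeP b s (e s))
          (removeP w s (e s)) (removeP e s (e s)) (b s) (f₀ z)) := by
      intro f₀ hf₀ z hz
      rcases Set.mem_insert_iff.mp hf₀ with hf | hf₀2
      · rw [hf]; exact hAb z hz
      rcases Set.mem_insert_iff.mp hf₀2 with hf | hf₀3
      · rw [hf]; exact hAw z hz
      · rw [Set.mem_singleton_iff] at hf₀3; rw [hf₀3]; exact hAe z hz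
    intro x hx hxs hxt
    obtain ⟨h, hh, hhx⟩ := hx
    have hQiff := orbit_Q (Q := fun z => (z = s ∨ z = e s) ∨
      SameComponent (removeP b s (e s)) (removeP w s (e s)) (removeP e s (e s))
        (b s) z) hsq hA h hh s
    rw [hhx] at hQiff
    rcases hQiff.mp (Or.inl (Or.inl rfl)) with (h1 | h1) | h1
    · exact absurd h1 hxs
    · exact absurd h1 hxt
    · exact h1
  -- untouched
  have huntouched : ∀ x y, ¬ SameComponent b w e s x → SameComponent b w e x y →
      SameComponent (removeP b s (e s)) (removeP w s (e s)) (removeP e s (e s)) x y := by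
    have hyp : ∀ f₀ ∈ ({b, w, e} : Set (Perm α)), ∀ z,
        ¬(∃ h ∈ Subgroup.closure ({b, w, e} : Set (Perm α)), h s = z) →
        ∃ h' ∈ Subgroup.closure ({removeP b s (e s), removeP w s (e s),
          removeP e s (e s)} : Set (Perm α)), h' z = f₀ z := by
      intro f₀ hf₀ z hz
      have hzs : z ≠ s := fun h => hz ⟨1, one_mem _, h.symm⟩
      have hzt : z ≠ e s := fun h => hz ⟨e, hme, h.symm⟩
      rcases Set.mem_insert_iff.mp hf₀ with hf | hf₀2
      · rw [hf]
        have h1 : z ≠ b s := fun h => hz ⟨b, hmb, h.symm⟩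
        have h2 : z ≠ b (e s) := fun h => hz ⟨b * e, mul_mem hmb hme, h.symm⟩
        exact ⟨removeP b s (e s), hmb', removeP_other hb.1 z hzs hzt h1 h2⟩
      rcases Set.mem_insert_iff.mp hf₀2 with hf | hf₀3
      · rw [hf]
        have h1 : z ≠ w s := fun h => hz ⟨w, hmw, h.symm⟩
        have h2 : z ≠ w (e s) := fun h => hz ⟨w * e, mul_mem hmw hme, h.symm⟩
        exact ⟨removeP w s (e s), hmw', removeP_other hw.1 z hzs hzt h1 h2⟩
      · rw [Set.mem_singleton_iff] at hf₀3; rw [hf₀3]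
        exact ⟨removeP e s (e s), hme', removeP_adj_other he.1 rfl z hzs hzt⟩
    intro x y hnx hxy
    obtain ⟨h, hh, rfl⟩ := hxy
    exact orbit_untouched hyp h hh x hnx
  -- conclude
  show ((S \ {s, e s}).image fun x => (S \ {s, e s}).filter
      (SameComponent (removeP b s (e s)) (removeP w s (e s)) (removeP e s (e s)) x)).card
    = (S.image fun x => S.filter (SameComponent b w e x)).card
  refine card_classes_eq (R := SameComponent b w e)
    (R' := SameComponent (removeP b s (e s)) (removeP w s (e s)) (removeP e s (e s)))
    hs htS (fun x => sc_refl _ _ _ x) (fun h => sc_symm h)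
    (fun h1 h2 => sc_trans h1 h2) (fun x => sc_refl _ _ _ x)
    (fun h => sc_symm h) (fun h1 h2 => sc_trans h1 h2)
    (pair_mem hb hs) hbs hbst ⟨b, hmb, rfl⟩ ⟨e, hme, rfl⟩ ?_
  intro x hx y hy
  rw [Finset.mem_sdiff, Finset.mem_insert, Finset.mem_singleton] at hx hy
  constructor
  · exact hmono x y
  · intro hxy
    by_cases hsx : SameComponent b w e s x
    · have hsy : SameComponent b w e s y := sc_trans hsx hxy
      exact sc_trans
        (sc_symm (hcaseA x hsx (fun h => hx.2 (Or.inl h)) (fun h => hx.2 (Or.inr h))))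
        (hcaseA y hsy (fun h => hy.2 (Or.inl h)) (fun h => hy.2 (Or.inr h)))
    · exact huntouched x y hsx hxy

end Components

end Main

end RT

/-- if `E₀ = {s, e s}` is a twisted edge of the map `M = (S,b,w,e)`,
then no extremity of `E₀` is a leaf, and `M \ E₀` has the same numbers of vertices,
faces and connected components as `M`, and one fewer edge; consequently
`d(M \ E₀) = d(M) - 1`. -/
theorem remove_twisted_edge (S : Finset α) (b w e : Equiv.Perm α)
    (hb : IsPairing S b) (hw : IsPairing S w) (he : IsPairing S e)
    (s : α) (hs : s ∈ S)
    (htwisted : IsTwisted b w s (e s)) :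
    (b s ≠ e s ∧ w s ≠ e s) ∧
    numVertices (S \ {s, e s}) (removeP b s (e s)) (removeP w s (e s))
        (removeP e s (e s)) = numVertices S b w e ∧
    numFaces (S \ {s, e s}) (removeP b s (e s)) (removeP w s (e s)) = numFaces S b w ∧
    numComponents (S \ {s, e s}) (removeP b s (e s)) (removeP w s (e s))
        (removeP e s (e s)) = numComponents S b w e ∧
    numEdges S = numEdges (S \ {s, e s}) + 1 ∧
    dInv (S \ {s, e s}) (removeP b s (e s)) (removeP w s (e s)) (removeP e s (e s))
      = dInv S b w e - 1 := by
  have htS : e s ∈ S := RT.pair_mem he hs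
  have hst : s ≠ e s := (RT.pair_ne he hs).symm
  have hbst : b s ≠ e s := RT.leaf_b hb hw he hs htwisted
  have hwst : w s ≠ e s := RT.leaf_w hb hw he hs htwisted
  have hV : numVertices (S \ {s, e s}) (removeP b s (e s)) (removeP w s (e s))
      (removeP e s (e s)) = numVertices S b w e := by
    unfold numVertices
    rw [RT.vert_eq hb he hs hbst, RT.vert_eq hw he hs hwst]
  have hF := RT.faces_eq hb hw he hs htwisted
  have hC := RT.comp_eq hb hw he hs htwisted
  have hsub : ({s, e s} : Finset α) ⊆ S := by
    intro x hx
    rcases Finset.mem_insert.mp hx with rfl | hx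
    · exact hs
    · rw [Finset.mem_singleton] at hx; rw [hx]; exact htS
  have hcard2 : ({s, e s} : Finset α).card = 2 := by
    rw [Finset.card_insert_of_notMem (by simp [hst]), Finset.card_singleton]
  have hcard : (S \ {s, e s}).card = S.card - 2 := by
    rw [Finset.card_sdiff_of_subset hsub, hcard2]
  have hcardle : 2 ≤ S.card := by
    calc 2 = ({s, e s} : Finset α).card := hcard2.symm
    _ ≤ S.card := Finset.card_le_card hsub
  have hE : numEdges S = numEdges (S \ {s, e s}) + 1 := by
    unfold numEdges
    rw [hcard]
    omega
  refine ⟨⟨hbst, hwst⟩, hV, hF, hC, hE, ?_⟩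
  unfold dInv eulerChar
  rw [hV, hF, hC, hE]
  push_cast
  ring


end
end

section
/- Let M be a map and let E0 be an interface edge of M. Then no extremity of E0 is a leaf, and M \ E0 has the same numbers of vertices and connected components as M, one fewer face, and one fewer edge; consequently d(M \ E0) = d(M). -/
open Equiv Polynomial

open scoped Classical

noncomputable section

variable {α : Type*}

/-! ### Auxiliary machinery -/

/-- The single-step relation generated by two permutations. -/
def Stp (b w : Equiv.Perm α) (u v : α) : Prop := b u = v ∨ w u = v

/-- The single-step relation generated by three permutations. -/
def Stp3 (b w e : Equiv.Perm α) (u v : α) : Prop := b u = v ∨ w u = v ∨ e u = v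

section Basic

variable {S : Finset α} {b w e f : Equiv.Perm α}

lemma IsPairing.invol (hf : IsPairing S f) : ∀ a, f (f a) = a := hf.1

lemma IsPairing.mem_of (hf : IsPairing S f) {a : α} (ha : a ∈ S) : f a ∈ S := by
  have h1 : f a ≠ a := (hf.2 a).mpr ha
  have h2 : f (f a) ≠ f a := by rw [hf.1 a]; exact fun h => h1 h.symm
  exact (hf.2 (f a)).mp h2

lemma IsPairing.ne_self (hf : IsPairing S f) {a : α} (ha : a ∈ S) : f a ≠ a :=
  (hf.2 a).mpr ha

lemma IsPairing.mul_self (hf : IsPairing S f) : f * f = 1 :=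
  Equiv.ext fun a => hf.1 a

lemma IsPairing.eq_iff (hf : IsPairing S f) {a c : α} : f a = c ↔ a = f c := by
  constructor
  · rintro rfl; exact (hf.1 a).symm
  · rintro rfl; exact hf.1 c

/-- Reachability preserves membership in `S`. -/
lemma stp_reach_mem (hb : IsPairing S b) (hw : IsPairing S w) {x y : α}
    (h : Relation.ReflTransGen (Stp b w) x y) (hx : x ∈ S) : y ∈ S := by
  induction h with
  | refl => exact hx
  | tail _ hstep ih =>
    rcases hstep with h' | h' <;> rw [← h']
    · exact hb.mem_of ih
    · exact hw.mem_of ih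

lemma stp3_reach_mem (hb : IsPairing S b) (hw : IsPairing S w) (he : IsPairing S e)
    {x y : α} (h : Relation.ReflTransGen (Stp3 b w e) x y) (hx : x ∈ S) : y ∈ S := by
  induction h with
  | refl => exact hx
  | tail _ hstep ih =>
    rcases hstep with h' | h' | h' <;> rw [← h']
    · exact hb.mem_of ih
    · exact hw.mem_of ih
    · exact he.mem_of ih

lemma stp_symmetric (hb : IsPairing S b) (hw : IsPairing S w) :
    Symmetric (Stp b w) := by
  rintro u v (h | h)
  · exact Or.inl (by rw [← h, hb.1])
  · exact Or.inr (by rw [← h, hw.1])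

lemma stp3_symmetric (hb : IsPairing S b) (hw : IsPairing S w) (he : IsPairing S e) :
    Symmetric (Stp3 b w e) := by
  rintro u v (h | h | h)
  · exact Or.inl (by rw [← h, hb.1])
  · exact Or.inr (Or.inl (by rw [← h, hw.1]))
  · exact Or.inr (Or.inr (by rw [← h, he.1]))

lemma stp_reach_symm (hb : IsPairing S b) (hw : IsPairing S w) {x y : α}
    (h : Relation.ReflTransGen (Stp b w) x y) : Relation.ReflTransGen (Stp b w) y x :=
  ((@Relation.ReflTransGen.stdSymm _ _ ⟨fun _ _ hh => stp_symmetric hb hw hh⟩).symm _ _) h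

lemma stp3_reach_symm (hb : IsPairing S b) (hw : IsPairing S w) (he : IsPairing S e)
    {x y : α} (h : Relation.ReflTransGen (Stp3 b w e) x y) :
    Relation.ReflTransGen (Stp3 b w e) y x :=
  ((@Relation.ReflTransGen.stdSymm _ _ ⟨fun _ _ hh => stp3_symmetric hb hw he hh⟩).symm _ _) h

end Basic

set_option linter.unusedSectionVars false

section FaceRel

variable {S : Finset α} {b w : Equiv.Perm α}

lemma conj_wb (hb : IsPairing S b) (hw : IsPairing S w) (j : ℤ) :
    b * (w * b) ^ j = (w * b) ^ (-j) * b := by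
  have hb1 : b * b = 1 := hb.mul_self
  have hw1 : w * w = 1 := hw.mul_self
  have hbi : b⁻¹ = b := by rw [inv_eq_iff_mul_eq_one]; exact hb1
  have hwi : w⁻¹ = w := by rw [inv_eq_iff_mul_eq_one]; exact hw1
  have h2 : b * (w * b) * b⁻¹ = b * w := by
    rw [hbi, mul_assoc, mul_assoc, hb1, mul_one]
  have h3 : (w * b)⁻¹ = b * w := by rw [mul_inv_rev, hbi, hwi]
  calc b * (w * b) ^ j = b * (w * b) ^ j * b⁻¹ * b := by
        rw [mul_assoc _ _ b, inv_mul_cancel, mul_one]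
    _ = (b * (w * b) * b⁻¹) ^ j * b := by rw [conj_zpow]
    _ = (w * b) ^ (-j) * b := by rw [h2, ← h3, inv_zpow, ← zpow_neg]

variable (hb : IsPairing S b) (hw : IsPairing S w)
include hb hw

lemma wb_key1 (x : α) (k j : ℤ) :
    ((w * b) ^ k * b) (((w * b) ^ j * b) x) = ((w * b) ^ (k - j)) x := by
  rw [← Equiv.Perm.mul_apply]
  congr 1
  rw [mul_assoc, ← mul_assoc b, conj_wb hb hw, mul_assoc, hb.mul_self, mul_one,
    ← zpow_add, sub_eq_add_neg]

lemma wb_key2 (x : α) (k j : ℤ) :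
    ((w * b) ^ k) (((w * b) ^ j) x) = ((w * b) ^ (k + j)) x := by
  rw [← Equiv.Perm.mul_apply, ← zpow_add]

lemma wb_key3 (x : α) (k j : ℤ) :
    ((w * b) ^ k * b) (((w * b) ^ j) x) = ((w * b) ^ (k - j) * b) x := by
  rw [← Equiv.Perm.mul_apply]
  congr 1
  rw [mul_assoc, conj_wb hb hw, ← mul_assoc, ← zpow_add, sub_eq_add_neg]

lemma wb_key4 (x : α) (k j : ℤ) :
    ((w * b) ^ k) (((w * b) ^ j * b) x) = ((w * b) ^ (k + j) * b) x := by
  rw [← Equiv.Perm.mul_apply, ← mul_assoc, ← zpow_add]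

omit hb hw

/-- `SameFace` is reflexive. -/
lemma sameFace_refl (b w : Equiv.Perm α) (x : α) : SameFace b w x x :=
  Or.inr ⟨0, by simp⟩

include hb hw

lemma sameFace_symm {x y : α} (h : SameFace b w x y) : SameFace b w y x := by
  rcases h with ⟨j, rfl⟩ | ⟨j, rfl⟩
  · exact Or.inl ⟨j, ((wb_key1 hb hw x j j).trans (by rw [sub_self, zpow_zero,
      Equiv.Perm.one_apply])).symm⟩
  · exact Or.inr ⟨-j, ((wb_key2 hb hw x (-j) j).trans (by rw [neg_add_cancel, zpow_zero,
      Equiv.Perm.one_apply])).symm⟩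

lemma sameFace_trans {x y z : α} (h1 : SameFace b w x y) (h2 : SameFace b w y z) :
    SameFace b w x z := by
  rcases h1 with ⟨j, rfl⟩ | ⟨j, rfl⟩ <;> rcases h2 with ⟨k, rfl⟩ | ⟨k, rfl⟩
  · exact Or.inr ⟨k - j, (wb_key1 hb hw x k j)⟩
  · exact Or.inl ⟨k + j, (wb_key4 hb hw x k j)⟩
  · exact Or.inl ⟨k - j, (wb_key3 hb hw x k j)⟩
  · exact Or.inr ⟨k + j, (wb_key2 hb hw x k j)⟩

/-- One `b`-step stays in the same face. -/
lemma sameFace_b (x : α) : SameFace b w x (b x) := Or.inl ⟨0, by simp⟩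

/-- One `w`-step stays in the same face. -/
lemma sameFace_w (x : α) : SameFace b w x (w x) :=
  Or.inl ⟨1, by rw [zpow_one, mul_assoc, Equiv.Perm.mul_apply, Equiv.Perm.mul_apply, hb.1]⟩

/-- `SameFace` coincides with reachability by `b`/`w`-steps. -/
lemma sameFace_iff_reach {x y : α} :
    SameFace b w x y ↔ Relation.ReflTransGen (Stp b w) x y := by
  constructor
  · have reach_pow : ∀ (u : α) (j : ℤ), Relation.ReflTransGen (Stp b w) u (((w * b) ^ j) u) := by
      intro u j
      induction j using Int.induction_on with
      | zero => simpa using Relation.ReflTransGen.refl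
      | succ k ih =>
        have : ((w * b) ^ ((k : ℤ) + 1)) u = w (b (((w * b) ^ (k : ℤ)) u)) := by
          rw [add_comm, zpow_add, zpow_one, Equiv.Perm.mul_apply, Equiv.Perm.mul_apply]
        rw [this]
        exact ih.tail (Or.inl rfl) |>.tail (Or.inr rfl)
      | pred k ih =>
        have : ((w * b) ^ (-(k : ℤ) - 1)) u = b (w (((w * b) ^ (-(k : ℤ))) u)) := by
          have h3 : (w * b)⁻¹ = b * w := by
            rw [mul_inv_rev, inv_eq_iff_mul_eq_one.2 hb.mul_self,
              inv_eq_iff_mul_eq_one.2 hw.mul_self]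
          have h4 : (-(k : ℤ) - 1) = -1 + -(k : ℤ) := by ring
          rw [h4, zpow_add, zpow_neg_one, h3, Equiv.Perm.mul_apply, Equiv.Perm.mul_apply]
        rw [this]
        exact ih.tail (Or.inr rfl) |>.tail (Or.inl rfl)
    rintro (⟨j, rfl⟩ | ⟨j, rfl⟩)
    · have h0 : Relation.ReflTransGen (Stp b w) x (b x) := Relation.ReflTransGen.single (Or.inl rfl)
      exact h0.trans (by simpa [Equiv.Perm.mul_apply] using reach_pow (b x) j)
    · exact reach_pow x j
  · intro h
    induction h with
    | refl => exact sameFace_refl b w x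
    | tail _ hstep ih =>
      rcases hstep with h' | h'
      · exact sameFace_trans hb hw ih (h' ▸ sameFace_b hb hw _)
      · exact sameFace_trans hb hw ih (h' ▸ sameFace_w hb hw _)

end FaceRel
section CompRel

variable {S : Finset α} {b w e : Equiv.Perm α}

lemma sameComponent_refl (b w e : Equiv.Perm α) (x : α) : SameComponent b w e x x :=
  ⟨1, Subgroup.one_mem _, rfl⟩

lemma sameComponent_symm {x y : α} (h : SameComponent b w e x y) :
    SameComponent b w e y x := by
  obtain ⟨g, hg, rfl⟩ := h
  exact ⟨g⁻¹, Subgroup.inv_mem _ hg, by simp⟩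

lemma sameComponent_trans {x y z : α} (h1 : SameComponent b w e x y)
    (h2 : SameComponent b w e y z) : SameComponent b w e x z := by
  obtain ⟨g, hg, rfl⟩ := h1
  obtain ⟨g', hg', rfl⟩ := h2
  exact ⟨g' * g, Subgroup.mul_mem _ hg' hg, by simp⟩

lemma sameComponent_iff_reach (hb : IsPairing S b) (hw : IsPairing S w)
    (he : IsPairing S e) {x y : α} :
    SameComponent b w e x y ↔ Relation.ReflTransGen (Stp3 b w e) x y := by
  constructor
  · rintro ⟨g, hg, rfl⟩
    have key : ∀ g ∈ Subgroup.closure ({b, w, e} : Set (Equiv.Perm α)), ∀ u,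
        Relation.ReflTransGen (Stp3 b w e) u (g u) := by
      intro g hg
      induction hg using Subgroup.closure_induction with
      | mem f hf =>
        intro u
        rcases hf with rfl | rfl | rfl
        · exact Relation.ReflTransGen.single (Or.inl rfl)
        · exact Relation.ReflTransGen.single (Or.inr (Or.inl rfl))
        · exact Relation.ReflTransGen.single (Or.inr (Or.inr rfl))
      | one => intro u; simpa using Relation.ReflTransGen.refl
      | mul g g' hg hg' ihg ihg' =>
        intro u
        have : (g * g') u = g (g' u) := rfl
        rw [this]
        exact (ihg' u).trans (ihg (g' u))
      | inv g hg ihg =>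
        intro u
        have h1 := ihg (g⁻¹ u)
        rw [← Equiv.Perm.mul_apply, mul_inv_cancel, Equiv.Perm.one_apply] at h1
        exact ((@Relation.ReflTransGen.stdSymm _ _ ⟨fun _ _ hh => stp3_symmetric hb hw he hh⟩).symm _ _) h1
    exact key g hg x
  · intro h
    induction h with
    | refl => exact sameComponent_refl b w e x
    | tail _ hstep ih =>
      rcases hstep with h' | h' | h'
      · exact sameComponent_trans ih ⟨b, Subgroup.subset_closure (by simp), h'⟩
      · exact sameComponent_trans ih ⟨w, Subgroup.subset_closure (by simp), h'⟩
      · exact sameComponent_trans ih ⟨e, Subgroup.subset_closure (by simp), h'⟩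

end CompRel
section RemoveP

variable {S : Finset α} {f : Equiv.Perm α} {s t : α}

lemma rp_fts (hf : ∀ a, f (f a) = a) (hfst : f s ≠ t) : f t ≠ s :=
  fun h => hfst (by rw [← h, hf])

variable (hf : ∀ a, f (f a) = a) (hst : s ≠ t) (hfs : f s ≠ s) (hft : f t ≠ t)
  (hfst : f s ≠ t)

include hf hst hfs hft hfst

lemma rp_s : removeP f s t s = s := by
  simp only [removeP, Equiv.Perm.mul_apply]
  rw [Equiv.swap_apply_right, Equiv.swap_apply_of_ne_of_ne (Ne.symm hst) (Ne.symm hft),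
    Equiv.swap_apply_right]

lemma rp_t : removeP f s t t = t := by
  simp only [removeP, Equiv.Perm.mul_apply]
  rw [Equiv.swap_apply_of_ne_of_ne hft (fun h => hst (f.injective h).symm),
    Equiv.swap_apply_right, Equiv.swap_apply_left]

lemma rp_fs : removeP f s t (f s) = f t := by
  have h1 : f t ≠ s := rp_fts hf hfst
  simp only [removeP, Equiv.Perm.mul_apply]
  rw [hf, Equiv.swap_apply_of_ne_of_ne hst (Ne.symm hfs), Equiv.swap_apply_left,
    Equiv.swap_apply_of_ne_of_ne h1 hft]

lemma rp_ft : removeP f s t (f t) = f s := by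
  simp only [removeP, Equiv.Perm.mul_apply]
  rw [hf, Equiv.swap_apply_left,
    Equiv.swap_apply_of_ne_of_ne hfs (fun h => hst (f.injective h)),
    Equiv.swap_apply_of_ne_of_ne hfs hfst]

lemma rp_other {x : α} (h1 : x ≠ s) (h2 : x ≠ t) (h3 : x ≠ f s) (h4 : x ≠ f t) :
    removeP f s t x = f x := by
  have e1 : f x ≠ t := fun h => h4 (by rw [← h, hf])
  have e2 : f x ≠ f s := fun h => h1 (by rw [← hf x, h, hf])
  have e3 : f x ≠ s := fun h => h3 (by rw [← h, hf])
  have e4 : f x ≠ f t := fun h => h2 (by rw [← hf x, h, hf])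
  simp only [removeP, Equiv.Perm.mul_apply]
  rw [Equiv.swap_apply_of_ne_of_ne e1 e2, Equiv.swap_apply_of_ne_of_ne e3 e4,
    Equiv.swap_apply_of_ne_of_ne e3 e1]

lemma rp_invol : ∀ a, removeP f s t (removeP f s t a) = a := by
  intro a
  by_cases h1 : a = s
  · rw [h1, rp_s hf hst hfs hft hfst, rp_s hf hst hfs hft hfst]
  by_cases h2 : a = t
  · rw [h2, rp_t hf hst hfs hft hfst, rp_t hf hst hfs hft hfst]
  by_cases h3 : a = f s
  · rw [h3, rp_fs hf hst hfs hft hfst, rp_ft hf hst hfs hft hfst]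
  by_cases h4 : a = f t
  · rw [h4, rp_ft hf hst hfs hft hfst, rp_fs hf hst hfs hft hfst]
  · rw [rp_other hf hst hfs hft hfst h1 h2 h3 h4]
    have e1 : f a ≠ t := fun h => h4 (by rw [← h, hf])
    have e2 : f a ≠ f s := fun h => h1 (by rw [← hf a, h, hf])
    have e3 : f a ≠ s := fun h => h3 (by rw [← h, hf])
    have e4 : f a ≠ f t := fun h => h2 (by rw [← hf a, h, hf])
    rw [rp_other hf hst hfs hft hfst e3 e1 e2 e4, hf]

lemma rp_pairing (hP : IsPairing S f) (hsS : s ∈ S) (htS : t ∈ S) :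
    IsPairing (S \ {s, t}) (removeP f s t) := by
  constructor
  · exact rp_invol hf hst hfs hft hfst
  · intro a
    by_cases h1 : a = s
    · subst h1
      simp [rp_s hf hst hfs hft hfst]
    by_cases h2 : a = t
    · subst h2
      simp [rp_t hf hst hfs hft hfst]
    by_cases h3 : a = f s
    · subst h3
      rw [rp_fs hf hst hfs hft hfst]
      simp only [Finset.mem_sdiff, Finset.mem_insert, Finset.mem_singleton]
      constructor
      · intro _
        exact ⟨hP.mem_of hsS, by push_neg; exact ⟨hfs, hfst⟩⟩
      · intro _
        exact fun h => hst (f.injective h.symm)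
    by_cases h4 : a = f t
    · subst h4
      rw [rp_ft hf hst hfs hft hfst]
      simp only [Finset.mem_sdiff, Finset.mem_insert, Finset.mem_singleton]
      constructor
      · intro _
        exact ⟨hP.mem_of htS, by push_neg; exact ⟨rp_fts hf hfst, hft⟩⟩
      · intro _
        exact fun h => hst (f.injective h)
    · rw [rp_other hf hst hfs hft hfst h1 h2 h3 h4]
      simp only [Finset.mem_sdiff, Finset.mem_insert, Finset.mem_singleton]
      rw [hP.2 a]
      constructor
      · intro h; exact ⟨h, by push_neg; exact ⟨h1, h2⟩⟩
      · intro h; exact h.1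

end RemoveP

section RemovePE

variable {S : Finset α} {e : Equiv.Perm α} {s t : α}

variable (he : ∀ a, e (e a) = a) (hst : s ≠ t) (hes : e s = t)

include he hst hes

lemma rpe_s : removeP e s t s = s := by
  have het : e t = s := by rw [← hes, he]
  simp only [removeP, Equiv.Perm.mul_apply, hes, het, Equiv.swap_self,
    Equiv.coe_refl, id_eq]
  rw [Equiv.swap_apply_right]

lemma rpe_t : removeP e s t t = t := by
  have het : e t = s := by rw [← hes, he]
  simp only [removeP, Equiv.Perm.mul_apply, hes, het, Equiv.swap_self,
    Equiv.coe_refl, id_eq]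
  rw [Equiv.swap_apply_left]

lemma rpe_other {x : α} (h1 : x ≠ s) (h2 : x ≠ t) : removeP e s t x = e x := by
  have het : e t = s := by rw [← hes, he]
  have e1 : e x ≠ s := fun h => h2 (e.injective (h.trans het.symm))
  have e2 : e x ≠ t := fun h => h1 (e.injective (h.trans hes.symm))
  simp only [removeP, Equiv.Perm.mul_apply, hes, het, Equiv.swap_self,
    Equiv.coe_refl, id_eq]
  rw [Equiv.swap_apply_of_ne_of_ne e1 e2]

lemma rpe_invol : ∀ a, removeP e s t (removeP e s t a) = a := by
  intro a
  by_cases h1 : a = s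
  · rw [h1, rpe_s he hst hes, rpe_s he hst hes]
  by_cases h2 : a = t
  · rw [h2, rpe_t he hst hes, rpe_t he hst hes]
  · rw [rpe_other he hst hes h1 h2]
    have het : e t = s := by rw [← hes, he]
    have e1 : e a ≠ s := fun h => h2 (e.injective (h.trans het.symm))
    have e2 : e a ≠ t := fun h => h1 (e.injective (h.trans hes.symm))
    rw [rpe_other he hst hes e1 e2, he]

lemma rpe_pairing (hP : IsPairing S e) : IsPairing (S \ {s, t}) (removeP e s t) := by
  constructor
  · exact rpe_invol he hst hes
  · intro a
    by_cases h1 : a = s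
    · subst h1; simp [rpe_s he hst hes]
    by_cases h2 : a = t
    · subst h2; simp [rpe_t he hst hes]
    · rw [rpe_other he hst hes h1 h2]
      simp only [Finset.mem_sdiff, Finset.mem_insert, Finset.mem_singleton]
      rw [hP.2 a]
      exact ⟨fun h => ⟨h, by push_neg; exact ⟨h1, h2⟩⟩, fun h => h.1⟩

end RemovePE
section Parity

/-- A finite set closed under a fixpoint-free involution has even cardinality. -/
lemma even_card_invol (C : Finset α) (f : α → α)
    (hf : ∀ x ∈ C, f x ∈ C ∧ f (f x) = x ∧ f x ≠ x) : Even C.card := by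
  induction C using Finset.strongInduction with
  | _ C ih =>
    rcases C.eq_empty_or_nonempty with rfl | ⟨x, hx⟩
    · simp
    · have hfx := hf x hx
      set C' := C \ {x, f x} with hC'
      have hsub : C' ⊂ C := by
        refine Finset.sdiff_ssubset ?_ (by simp)
        intro y hy
        simp only [Finset.mem_insert, Finset.mem_singleton] at hy
        rcases hy with rfl | rfl
        · exact hx
        · exact hfx.1
      have hcard : C'.card = C.card - 2 := by
        rw [hC', Finset.card_sdiff_of_subset]
        · congr 1
          rw [Finset.card_insert_of_notMem (by simp [Ne.symm hfx.2.2]),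
            Finset.card_singleton]
        · intro y hy
          simp only [Finset.mem_insert, Finset.mem_singleton] at hy
          rcases hy with rfl | rfl
          · exact hx
          · exact hfx.1
      have hclosed : ∀ y ∈ C', f y ∈ C' ∧ f (f y) = y ∧ f y ≠ y := by
        intro y hy
        rw [hC', Finset.mem_sdiff] at hy
        simp only [Finset.mem_insert, Finset.mem_singleton] at hy
        push_neg at hy
        obtain ⟨hyC, hyx, hyfx⟩ := hy
        have hfy := hf y hyC
        refine ⟨?_, hfy.2.1, hfy.2.2⟩
        rw [hC', Finset.mem_sdiff]
        simp only [Finset.mem_insert, Finset.mem_singleton]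
        push_neg
        refine ⟨hfy.1, ?_, ?_⟩
        · intro h; exact hyfx (by rw [← hfy.2.1, h])
        · intro h
          apply hyx
          rw [← hfy.2.1, h, hfx.2.1]
      have hev := ih C' hsub hclosed
      have h2 : 2 ≤ C.card := by
        have : ({x, f x} : Finset α) ⊆ C := by
          intro y hy
          simp only [Finset.mem_insert, Finset.mem_singleton] at hy
          rcases hy with rfl | rfl
          · exact hx
          · exact hfx.1
        calc 2 = ({x, f x} : Finset α).card := by
              rw [Finset.card_insert_of_notMem (by simp [Ne.symm hfx.2.2]),
                Finset.card_singleton]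
          _ ≤ C.card := Finset.card_le_card this
      obtain ⟨k, hk⟩ := hev
      exact ⟨k + 1, by omega⟩

/-- Parity contradiction: a finite set carrying a fixpoint-free involution, and a
fixpoint-free involution away from a single point, cannot exist. -/
lemma parity_contra (C : Finset α) (f g : α → α) (c : α) (hc : c ∈ C)
    (hf : ∀ x ∈ C, f x ∈ C ∧ f (f x) = x ∧ f x ≠ x)
    (hg : ∀ x ∈ C, x ≠ c → g x ∈ C ∧ g x ≠ c ∧ g (g x) = x ∧ g x ≠ x) : False := by
  have h1 : Even C.card := even_card_invol C f hf
  have h2 : Even (C.erase c).card := by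
    apply even_card_invol _ g
    intro x hx
    rw [Finset.mem_erase] at hx
    obtain ⟨hxc, hxC⟩ := hx
    have := hg x hxC hxc
    exact ⟨Finset.mem_erase.2 ⟨this.2.1, this.1⟩, this.2.2.1, this.2.2.2⟩
  rw [Finset.card_erase_of_mem hc] at h2
  have h3 : 1 ≤ C.card := Finset.card_pos.2 ⟨c, hc⟩
  obtain ⟨k, hk⟩ := h1
  obtain ⟨m, hm⟩ := h2
  omega

end Parity
section Sweep

variable {S : Finset α} {b w B W : Equiv.Perm α} {p z : α}

/-- The sweeping lemma: if `B`, `W` agree with `b`, `w` on the face of `p`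
except at `p` itself and its partners, and `b p` is reachable from `z` by
`B/W`-steps, then the whole face of `p` (except `p`) is reachable from `z`. -/
lemma sweep (hb : IsPairing S b) (hw : IsPairing S w) (hp : p ∈ S)
    (hB : ∀ x, x ≠ p → x ≠ b p → SameFace b w p x → B x = b x)
    (hW : ∀ x, x ≠ p → x ≠ w p → SameFace b w p x → W x = w x)
    (hz : Relation.ReflTransGen (Stp B W) z (b p)) :
    ∀ x, SameFace b w p x → x ≠ p → Relation.ReflTransGen (Stp B W) z x := by
  classical
  set C : Finset α := S.filter
    (fun x => SameFace b w p x ∧ x ≠ p ∧ ¬ Relation.ReflTransGen (Stp B W) z x) with hC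
  have memC : ∀ {x}, x ∈ C ↔ x ∈ S ∧ SameFace b w p x ∧ x ≠ p ∧
      ¬ Relation.ReflTransGen (Stp B W) z x := by
    intro x; rw [hC, Finset.mem_filter]
  have hbpC : b p ∉ C := fun h => (memC.1 h).2.2.2 hz
  have hCb : ∀ x ∈ C, b x ∈ C ∧ b (b x) = x ∧ b x ≠ x := by
    intro x hx
    obtain ⟨hxS, hfacex, hxp, hxr⟩ := memC.1 hx
    have hxbp : x ≠ b p := fun h => hbpC (h ▸ hx)
    have hbxp : b x ≠ p := fun h => hxbp (by rw [← hb.1 x, h])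
    have hbxbp : b x ≠ b p := fun h => hxp (b.injective h)
    have hfacebx : SameFace b w p (b x) := sameFace_trans hb hw hfacex (sameFace_b hb hw x)
    refine ⟨memC.2 ⟨hb.mem_of hxS, hfacebx, hbxp, ?_⟩, hb.1 x, hb.ne_self hxS⟩
    intro hr
    apply hxr
    refine hr.tail (Or.inl ?_)
    rw [hB (b x) hbxp hbxbp hfacebx, hb.1]
  have hwstep : ∀ x ∈ C, x ≠ w p → w x ∈ C ∧ w x ≠ w p ∧ w (w x) = x ∧ w x ≠ x := by
    intro x hx hxwp
    obtain ⟨hxS, hfacex, hxp, hxr⟩ := memC.1 hx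
    have hwxp : w x ≠ p := fun h => hxwp (by rw [← hw.1 x, h])
    have hwxwp : w x ≠ w p := fun h => hxp (w.injective h)
    have hfacewx : SameFace b w p (w x) := sameFace_trans hb hw hfacex (sameFace_w hb hw x)
    refine ⟨memC.2 ⟨hw.mem_of hxS, hfacewx, hwxp, ?_⟩, hwxwp, hw.1 x, hw.ne_self hxS⟩
    intro hr
    apply hxr
    refine hr.tail (Or.inr ?_)
    rw [hW (w x) hwxp hwxwp hfacewx, hw.1]
  have hwp : Relation.ReflTransGen (Stp B W) z (w p) := by
    by_contra hnwp
    refine parity_contra C b w (w p) ?_ (fun x hx => hCb x hx) hwstep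
    exact memC.2 ⟨hw.mem_of hp, sameFace_w hb hw p, hw.ne_self hp, hnwp⟩
  have hwpC : w p ∉ C := fun h => (memC.1 h).2.2.2 hwp
  have hCw : ∀ x ∈ C, w x ∈ C := by
    intro x hx
    exact (hwstep x hx (fun h => hwpC (h ▸ hx))).1
  intro x hface hxp
  by_contra hxr
  have hxS : x ∈ S := stp_reach_mem hb hw ((sameFace_iff_reach hb hw).mp hface) hp
  have hxC : x ∈ C := memC.2 ⟨hxS, hface, hxp, hxr⟩
  have hreach : Relation.ReflTransGen (Stp b w) x p :=
    (sameFace_iff_reach hb hw).mp (sameFace_symm hb hw hface)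
  have hall : ∀ y, Relation.ReflTransGen (Stp b w) x y → y ∈ C := by
    intro y hy
    induction hy with
    | refl => exact hxC
    | tail _ hstep ih =>
      rcases hstep with h' | h'
      · exact h' ▸ (hCb _ ih).1
      · exact h' ▸ hCw _ ih
  exact (memC.1 (hall p hreach)).2.2.1 rfl

end Sweep
section Counting

variable {R R' : α → α → Prop}

lemma filter_rel_eq (hsym : ∀ {x y}, R x y → R y x)
    (htrans : ∀ {x y u}, R x y → R y u → R x u) {x y : α} (h : R x y) (S : Finset α) :
    S.filter (R x) = S.filter (R y) := by
  ext u
  simp only [Finset.mem_filter]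
  exact and_congr_right fun _ => ⟨fun hxu => htrans (hsym h) hxu, fun hyu => htrans h hyu⟩

/-- Generic class-counting lemma: if the equivalence relation `R'` on `S \ {s,t}`
coincides with `R` away from `s, t`, and the classes of `s` and `t` share a common
element `z` distinct from `s` and `t`, then the number of `R'`-classes on `S \ {s,t}`
equals the number of `R`-classes on `S`. -/
lemma countShrink (S : Finset α) (s t z : α)
    (hs : s ∈ S) (ht : t ∈ S) (hst : s ≠ t) (hz : z ∈ S) (hzs : z ≠ s) (hzt : z ≠ t)
    (hRr : ∀ x, R x x) (hRsym : ∀ {x y}, R x y → R y x)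
    (hRtr : ∀ {x y u}, R x y → R y u → R x u)
    (hiff : ∀ x y, x ≠ s → x ≠ t → y ≠ s → y ≠ t → (R' x y ↔ R x y))
    (hsz : R s z) (htz : R t z) :
    ((S \ {s, t}).image fun x => (S \ {s, t}).filter (R' x)).card
      = (S.image fun x => S.filter (R x)).card := by
  classical
  have memst : ∀ {u : α}, u ∈ ({s, t} : Finset α) ↔ u = s ∨ u = t := by
    intro u; simp
  have step1 : ∀ x, x ≠ s → x ≠ t →
      (S \ {s, t}).filter (R' x) = (S.filter (R x)) \ {s, t} := by
    intro x hxs hxt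
    ext u
    simp only [Finset.mem_filter, Finset.mem_sdiff, Finset.mem_insert,
      Finset.mem_singleton]
    constructor
    · rintro ⟨⟨huS, hu⟩, hr⟩
      push_neg at hu
      exact ⟨⟨huS, (hiff x u hxs hxt hu.1 hu.2).mp hr⟩, by push_neg; exact hu⟩
    · rintro ⟨⟨huS, hr⟩, hu⟩
      push_neg at hu
      exact ⟨⟨huS, by push_neg; exact hu⟩, (hiff x u hxs hxt hu.1 hu.2).mpr hr⟩
  have step2 : ((S \ {s, t}).image fun x => (S \ {s, t}).filter (R' x))
      = (S.image fun x => S.filter (R x)).image (· \ ({s, t} : Finset α)) := by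
    ext F
    simp only [Finset.mem_image]
    constructor
    · rintro ⟨x, hx, rfl⟩
      rw [Finset.mem_sdiff, memst] at hx
      push_neg at hx
      exact ⟨S.filter (R x), ⟨x, hx.1, rfl⟩, (step1 x hx.2.1 hx.2.2).symm⟩
    · rintro ⟨F', ⟨x, hx, rfl⟩, rfl⟩
      by_cases hxs : x = s
      · subst hxs
        refine ⟨z, ?_, ?_⟩
        · rw [Finset.mem_sdiff, memst]; push_neg; exact ⟨hz, hzs, hzt⟩
        · rw [step1 z hzs hzt, filter_rel_eq @hRsym @hRtr hsz S]
      by_cases hxt : x = t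
      · subst hxt
        refine ⟨z, ?_, ?_⟩
        · rw [Finset.mem_sdiff, memst]; push_neg; exact ⟨hz, hzs, hzt⟩
        · rw [step1 z hzs hzt, filter_rel_eq @hRsym @hRtr htz S]
      · refine ⟨x, ?_, step1 x hxs hxt⟩
        rw [Finset.mem_sdiff, memst]; push_neg; exact ⟨hx, hxs, hxt⟩
  have step3 : Set.InjOn (· \ ({s, t} : Finset α))
      ↑(S.image fun x => S.filter (R x)) := by
    rintro F hF F' hF' hFF'
    simp only [Finset.coe_image, Set.mem_image, Finset.mem_coe] at hF hF'
    obtain ⟨x, hx, rfl⟩ := hF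
    obtain ⟨x', hx', rfl⟩ := hF'
    have key : ∀ u ∈ S, ∃ y, y ∈ S.filter (R u) ∧ y ≠ s ∧ y ≠ t := by
      intro u hu
      by_cases hus : u = s
      · exact ⟨z, Finset.mem_filter.2 ⟨hz, hus ▸ hsz⟩, hzs, hzt⟩
      by_cases hut : u = t
      · exact ⟨z, Finset.mem_filter.2 ⟨hz, hut ▸ htz⟩, hzs, hzt⟩
      · exact ⟨u, Finset.mem_filter.2 ⟨hu, hRr u⟩, hus, hut⟩
    obtain ⟨y, hyF, hys, hyt⟩ := key x hx
    have hymem : y ∈ S.filter (R x) \ {s, t} := by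
      rw [Finset.mem_sdiff, memst]; push_neg; exact ⟨hyF, hys, hyt⟩
    have hFF2 : S.filter (R x) \ {s, t} = S.filter (R x') \ {s, t} := hFF'
    rw [hFF2] at hymem
    have hyF' : y ∈ S.filter (R x') := (Finset.mem_sdiff.1 hymem).1
    have h1 : R x y := (Finset.mem_filter.1 hyF).2
    have h2 : R x' y := (Finset.mem_filter.1 hyF').2
    rw [filter_rel_eq @hRsym @hRtr h1 S, filter_rel_eq @hRsym @hRtr h2 S]
  rw [step2, Finset.card_image_of_injOn step3]

end Counting
section Vertex

variable {S : Finset α} {f e : Equiv.Perm α} {s : α}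

variable (hf : IsPairing S f) (he : IsPairing S e) (hs : s ∈ S) (hfst : f s ≠ e s)

include hf he hs hfst

lemma vx_forward : ∀ x y, Relation.ReflTransGen (Stp (removeP f s (e s)) (removeP e s (e s))) x y →
    Relation.ReflTransGen (Stp f e) x y := by
  set t := e s with ht
  have hst : s ≠ t := (he.ne_self hs).symm
  have htS : t ∈ S := he.mem_of hs
  have hfs : f s ≠ s := hf.ne_self hs
  have hft : f t ≠ t := hf.ne_self htS
  have hes : e s = t := rfl
  intro x y hxy
  induction hxy with
  | refl => exact Relation.ReflTransGen.refl
  | @tail u v _ hstep ih =>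
    rcases hstep with h' | h'
    · by_cases h1 : u = s
      · subst h1; rw [rp_s hf.1 hst hfs hft hfst] at h'; exact h' ▸ ih
      by_cases h2 : u = t
      · subst h2; rw [rp_t hf.1 hst hfs hft hfst] at h'; exact h' ▸ ih
      by_cases h3 : u = f s
      · subst h3
        rw [rp_fs hf.1 hst hfs hft hfst] at h'
        subst h'
        exact ih.tail (Or.inl (hf.1 s)) |>.tail (Or.inr hes) |>.tail (Or.inl rfl)
      by_cases h4 : u = f t
      · subst h4
        rw [rp_ft hf.1 hst hfs hft hfst] at h'
        subst h'
        have het : e t = s := by rw [← hes, he.1]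
        exact ih.tail (Or.inl (hf.1 t)) |>.tail (Or.inr het) |>.tail (Or.inl rfl)
      · rw [rp_other hf.1 hst hfs hft hfst h1 h2 h3 h4] at h'
        exact ih.tail (Or.inl h')
    · by_cases h1 : u = s
      · subst h1; rw [rpe_s he.1 hst hes] at h'; exact h' ▸ ih
      by_cases h2 : u = t
      · subst h2; rw [rpe_t he.1 hst hes] at h'; exact h' ▸ ih
      · rw [rpe_other he.1 hst hes h1 h2] at h'
        exact ih.tail (Or.inr h')

lemma vx_backward : ∀ x y, Relation.ReflTransGen (Stp f e) x y →
    Relation.ReflTransGen (Stp (removeP f s (e s)) (removeP e s (e s)))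
      (if x = s then f s else if x = e s then f (e s) else x)
      (if y = s then f s else if y = e s then f (e s) else y) := by
  set t := e s with ht
  have hst : s ≠ t := (he.ne_self hs).symm
  have htS : t ∈ S := he.mem_of hs
  have hfs : f s ≠ s := hf.ne_self hs
  have hft : f t ≠ t := hf.ne_self htS
  have hfts : f t ≠ s := rp_fts hf.1 hfst
  have hes : e s = t := rfl
  have het : e t = s := by rw [← hes, he.1]
  set π : α → α := fun x => if x = s then f s else if x = t then f t else x with hπ
  have hπs : π s = f s := by simp [hπ]
  have hπt : π t = f t := by simp [hπ, hst.symm]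
  have hπo : ∀ {x}, x ≠ s → x ≠ t → π x = x := by
    intro x h1 h2; simp [hπ, h1, h2]
  intro x y hxy
  induction hxy with
  | refl => exact Relation.ReflTransGen.refl
  | @tail u v _ hstep ih =>
    refine ih.trans ?_
    have goalstep : Relation.ReflTransGen (Stp (removeP f s t) (removeP e s t)) (π u) (π v) := by
      rcases hstep with h' | h'
      · by_cases h1 : u = s
        · subst h1
          rw [← h', hπs, hπo hfs hfst]
        by_cases h2 : u = t
        · subst h2
          rw [← h', hπt, hπo hfts hft]
        by_cases h3 : u = f s
        · subst h3
          rw [← h', hf.1, hπs, hπo hfs hfst]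
        by_cases h4 : u = f t
        · subst h4
          rw [← h', hf.1, hπt, hπo hfts hft]
        · have hv1 : v ≠ s := fun hh => h3 (by rw [← hf.1 u, h', hh])
          have hv2 : v ≠ t := fun hh => h4 (by rw [← hf.1 u, h', hh])
          rw [hπo h1 h2, hπo hv1 hv2]
          exact Relation.ReflTransGen.single
            (Or.inl (by rw [rp_other hf.1 hst hfs hft hfst h1 h2 h3 h4]; exact h'))
      · by_cases h1 : u = s
        · subst h1
          rw [← h', hes, hπs, hπt]
          exact Relation.ReflTransGen.single (Or.inl (rp_fs hf.1 hst hfs hft hfst))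
        by_cases h2 : u = t
        · subst h2
          rw [← h', het, hπt, hπs]
          exact Relation.ReflTransGen.single (Or.inl (rp_ft hf.1 hst hfs hft hfst))
        · have hv1 : v ≠ s := fun hh => h2 (by rw [← he.1 u, h', hh, ← het, he.1])
          have hv2 : v ≠ t := fun hh => h1 (by rw [← he.1 u, h', hh, ← hes, he.1])
          rw [hπo h1 h2, hπo hv1 hv2]
          exact Relation.ReflTransGen.single
            (Or.inr (by rw [rpe_other he.1 hst hes h1 h2]; exact h'))
    exact goalstep

lemma vx_iff {x y : α} (hx1 : x ≠ s) (hx2 : x ≠ e s) (hy1 : y ≠ s) (hy2 : y ≠ e s) :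
    SameFace (removeP f s (e s)) (removeP e s (e s)) x y ↔ SameFace f e x y := by
  set t := e s with ht
  have hst : s ≠ t := (he.ne_self hs).symm
  have htS : t ∈ S := he.mem_of hs
  have hfs : f s ≠ s := hf.ne_self hs
  have hft : f t ≠ t := hf.ne_self htS
  have hf' : IsPairing (S \ {s, t}) (removeP f s t) :=
    rp_pairing hf.1 hst hfs hft hfst hf hs htS
  have he' : IsPairing (S \ {s, t}) (removeP e s t) := rpe_pairing he.1 hst rfl he
  constructor
  · intro h
    exact (sameFace_iff_reach hf he).mpr
      (vx_forward hf he hs hfst x y ((sameFace_iff_reach hf' he').mp h))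
  · intro h
    have := vx_backward hf he hs hfst x y ((sameFace_iff_reach hf he).mp h)
    rw [if_neg hx1, if_neg hx2, if_neg hy1, if_neg hy2] at this
    exact (sameFace_iff_reach hf' he').mpr this

/-- Removing an edge does not change the number of vertices on the side of `f`. -/
lemma vertex_count :
    numFaces (S \ {s, e s}) (removeP f s (e s)) (removeP e s (e s)) = numFaces S f e := by
  set t := e s with ht
  have hst : s ≠ t := (he.ne_self hs).symm
  have htS : t ∈ S := he.mem_of hs
  have hfs : f s ≠ s := hf.ne_self hs
  have hfsS : f s ∈ S := hf.mem_of hs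
  simp only [numFaces, faces, faceOf]
  refine countShrink S s t (f s) hs htS hst hfsS hfs hfst
    (sameFace_refl f e) (sameFace_symm hf he) (sameFace_trans hf he)
    (fun x y hx1 hx2 hy1 hy2 => vx_iff hf he hs hfst hx1 hx2 hy1 hy2)
    (sameFace_b hf he s) ?_
  exact sameFace_trans hf he (sameFace_symm hf he (sameFace_w hf he s)) (sameFace_b hf he s)

end Vertex
section Face

variable {S : Finset α} {b w e : Equiv.Perm α} {s : α}

variable (hb : IsPairing S b) (hw : IsPairing S w) (he : IsPairing S e) (hs : s ∈ S)
  (hint : ¬ SameFace b w s (e s))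

include hb hw he hs hint

lemma part1_b : b s ≠ e s :=
  fun h => hint (h ▸ sameFace_b hb hw s)

lemma part1_w : w s ≠ e s :=
  fun h => hint (h ▸ sameFace_w hb hw s)

/-- `Q`-transitivity helper and the two sweeps packaged: every element of the face of
`s` or of the face of `e s` (other than `s`, `e s`) is reachable from `b s` in the
new map. -/
lemma sweep_s : ∀ x, SameFace b w s x → x ≠ s →
    Relation.ReflTransGen (Stp (removeP b s (e s)) (removeP w s (e s))) (b s) x := by
  set t := e s with ht
  have hst : s ≠ t := (he.ne_self hs).symm
  have htS : t ∈ S := he.mem_of hs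
  refine sweep hb hw hs ?_ ?_ Relation.ReflTransGen.refl
  · intro x h1 h2 hface
    refine rp_other hb.1 hst (hb.ne_self hs) (hb.ne_self htS) (part1_b hb hw he hs hint)
      h1 ?_ h2 ?_
    · intro hxt
      exact hint (hxt ▸ hface)
    · intro hxbt
      exact hint (sameFace_trans hb hw (hxbt ▸ hface)
        (sameFace_symm hb hw (sameFace_b hb hw t)))
  · intro x h1 h2 hface
    refine rp_other hw.1 hst (hw.ne_self hs) (hw.ne_self htS) (part1_w hb hw he hs hint)
      h1 ?_ h2 ?_
    · intro hxt
      exact hint (hxt ▸ hface)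
    · intro hxwt
      exact hint (sameFace_trans hb hw (hxwt ▸ hface)
        (sameFace_symm hb hw (sameFace_w hb hw t)))

lemma sweep_t : ∀ x, SameFace b w (e s) x → x ≠ e s →
    Relation.ReflTransGen (Stp (removeP b s (e s)) (removeP w s (e s))) (b s) x := by
  set t := e s with ht
  have hst : s ≠ t := (he.ne_self hs).symm
  have htS : t ∈ S := he.mem_of hs
  have hint' : ¬ SameFace b w t s := fun h => hint (sameFace_symm hb hw h)
  refine sweep hb hw htS ?_ ?_
    (Relation.ReflTransGen.single (Or.inl
      (rp_fs hb.1 hst (hb.ne_self hs) (hb.ne_self htS) (part1_b hb hw he hs hint))))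
  · intro x h1 h2 hface
    refine rp_other hb.1 hst (hb.ne_self hs) (hb.ne_self htS) (part1_b hb hw he hs hint)
      ?_ h1 ?_ h2
    · intro hxs
      exact hint' (hxs ▸ hface)
    · intro hxbs
      exact hint' (sameFace_trans hb hw (hxbs ▸ hface)
        (sameFace_symm hb hw (sameFace_b hb hw s)))
  · intro x h1 h2 hface
    refine rp_other hw.1 hst (hw.ne_self hs) (hw.ne_self htS) (part1_w hb hw he hs hint)
      ?_ h1 ?_ h2
    · intro hxs
      exact hint' (hxs ▸ hface)
    · intro hxws
      exact hint' (sameFace_trans hb hw (hxws ▸ hface)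
        (sameFace_symm hb hw (sameFace_w hb hw s)))

lemma q_trans {x y z : α}
    (h1 : SameFace b w x y ∨ (SameFace b w s x ∧ SameFace b w (e s) y) ∨
      (SameFace b w (e s) x ∧ SameFace b w s y))
    (h2 : SameFace b w y z ∨ (SameFace b w s y ∧ SameFace b w (e s) z) ∨
      (SameFace b w (e s) y ∧ SameFace b w s z)) :
    SameFace b w x z ∨ (SameFace b w s x ∧ SameFace b w (e s) z) ∨
      (SameFace b w (e s) x ∧ SameFace b w s z) := by
  have tr := fun {u v r} => sameFace_trans hb hw (x := u) (y := v) (z := r)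
  have sy := fun {u v} => sameFace_symm hb hw (x := u) (y := v)
  rcases h1 with h1 | ⟨ha, hb1⟩ | ⟨ha, hb1⟩ <;>
    rcases h2 with h2 | ⟨hc, hd⟩ | ⟨hc, hd⟩
  · exact Or.inl (tr h1 h2)
  · exact Or.inr (Or.inl ⟨tr hc (sy h1), hd⟩)
  · exact Or.inr (Or.inr ⟨tr hc (sy h1), hd⟩)
  · exact Or.inr (Or.inl ⟨ha, tr hb1 h2⟩)
  · exact absurd (tr hc (sy hb1)) hint
  · exact Or.inl (tr (sy ha) hd)
  · exact Or.inr (Or.inr ⟨ha, tr hb1 h2⟩)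
  · exact Or.inl (tr (sy ha) hd)
  · exact absurd (tr hb1 (sy hc)) hint

lemma face_forward : ∀ x y,
    Relation.ReflTransGen (Stp (removeP b s (e s)) (removeP w s (e s))) x y →
    SameFace b w x y ∨ (SameFace b w s x ∧ SameFace b w (e s) y) ∨
      (SameFace b w (e s) x ∧ SameFace b w s y) := by
  set t := e s with ht
  have hst : s ≠ t := (he.ne_self hs).symm
  have htS : t ∈ S := he.mem_of hs
  have hbs : b s ≠ s := hb.ne_self hs
  have hbt : b t ≠ t := hb.ne_self htS
  have hbst : b s ≠ t := part1_b hb hw he hs hint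
  have hws : w s ≠ s := hw.ne_self hs
  have hwt : w t ≠ t := hw.ne_self htS
  have hwst : w s ≠ t := part1_w hb hw he hs hint
  intro x y hxy
  induction hxy with
  | refl => exact Or.inl (sameFace_refl b w x)
  | @tail u v _ hstep ih =>
    refine q_trans hb hw he hs hint ih ?_
    rcases hstep with h' | h'
    · by_cases h1 : u = s
      · subst h1; rw [rp_s hb.1 hst hbs hbt hbst] at h'; subst h'; exact Or.inl (sameFace_refl b w _)
      by_cases h2 : u = t
      · subst h2; rw [rp_t hb.1 hst hbs hbt hbst] at h'; subst h'; exact Or.inl (sameFace_refl b w _)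
      by_cases h3 : u = b s
      · subst h3
        rw [rp_fs hb.1 hst hbs hbt hbst] at h'
        subst h'
        exact Or.inr (Or.inl ⟨sameFace_b hb hw s, sameFace_b hb hw t⟩)
      by_cases h4 : u = b t
      · subst h4
        rw [rp_ft hb.1 hst hbs hbt hbst] at h'
        subst h'
        exact Or.inr (Or.inr ⟨sameFace_b hb hw t, sameFace_b hb hw s⟩)
      · rw [rp_other hb.1 hst hbs hbt hbst h1 h2 h3 h4] at h'
        exact h' ▸ Or.inl (sameFace_b hb hw u)
    · by_cases h1 : u = s
      · subst h1; rw [rp_s hw.1 hst hws hwt hwst] at h'; subst h'; exact Or.inl (sameFace_refl b w _)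
      by_cases h2 : u = t
      · subst h2; rw [rp_t hw.1 hst hws hwt hwst] at h'; subst h'; exact Or.inl (sameFace_refl b w _)
      by_cases h3 : u = w s
      · subst h3
        rw [rp_fs hw.1 hst hws hwt hwst] at h'
        subst h'
        exact Or.inr (Or.inl ⟨sameFace_w hb hw s, sameFace_w hb hw t⟩)
      by_cases h4 : u = w t
      · subst h4
        rw [rp_ft hw.1 hst hws hwt hwst] at h'
        subst h'
        exact Or.inr (Or.inr ⟨sameFace_w hb hw t, sameFace_w hb hw s⟩)
      · rw [rp_other hw.1 hst hws hwt hwst h1 h2 h3 h4] at h'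
        exact h' ▸ Or.inl (sameFace_w hb hw u)

/-- Translation of paths avoiding the faces of `s` and `e s`. -/
lemma face_avoid : ∀ x y, ¬ SameFace b w s x → ¬ SameFace b w (e s) x →
    Relation.ReflTransGen (Stp b w) x y →
    Relation.ReflTransGen (Stp (removeP b s (e s)) (removeP w s (e s))) x y := by
  set t := e s with ht
  have hst : s ≠ t := (he.ne_self hs).symm
  have htS : t ∈ S := he.mem_of hs
  have hbs : b s ≠ s := hb.ne_self hs
  have hbt : b t ≠ t := hb.ne_self htS
  have hbst : b s ≠ t := part1_b hb hw he hs hint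
  have hws : w s ≠ s := hw.ne_self hs
  have hwt : w t ≠ t := hw.ne_self htS
  have hwst : w s ≠ t := part1_w hb hw he hs hint
  intro x y hsx htx hxy
  induction hxy with
  | refl => exact Relation.ReflTransGen.refl
  | @tail u v huv hstep ih =>
    have hxu : SameFace b w x u := (sameFace_iff_reach hb hw).mpr huv
    have hsu : ¬ SameFace b w s u := fun h' =>
      hsx (sameFace_trans hb hw h' (sameFace_symm hb hw hxu))
    have htu : ¬ SameFace b w t u := fun h' =>
      htx (sameFace_trans hb hw h' (sameFace_symm hb hw hxu))
    have h1 : u ≠ s := fun hh => hsu (by rw [hh]; exact sameFace_refl b w s)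
    have h2 : u ≠ t := fun hh => htu (by rw [hh]; exact sameFace_refl b w t)
    rcases hstep with h' | h'
    · have h3 : u ≠ b s := fun hh => hsu (by rw [hh]; exact sameFace_b hb hw s)
      have h4 : u ≠ b t := fun hh => htu (by rw [hh]; exact sameFace_b hb hw t)
      exact ih.tail (Or.inl (by
        rw [rp_other hb.1 hst hbs hbt hbst h1 h2 h3 h4]; exact h'))
    · have h3 : u ≠ w s := fun hh => hsu (by rw [hh]; exact sameFace_w hb hw s)
      have h4 : u ≠ w t := fun hh => htu (by rw [hh]; exact sameFace_w hb hw t)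
      exact ih.tail (Or.inr (by
        rw [rp_other hw.1 hst hws hwt hwst h1 h2 h3 h4]; exact h'))

end Face
section Face2

variable {S : Finset α} {b w e : Equiv.Perm α} {s : α}

variable (hb : IsPairing S b) (hw : IsPairing S w) (he : IsPairing S e) (hs : s ∈ S)
  (hint : ¬ SameFace b w s (e s))

include hb hw he hs hint

lemma face_iff {x y : α} (hx1 : x ≠ s) (hx2 : x ≠ e s) (hy1 : y ≠ s) (hy2 : y ≠ e s) :
    SameFace (removeP b s (e s)) (removeP w s (e s)) x y ↔
      (SameFace b w x y ∨ (SameFace b w s x ∧ SameFace b w (e s) y) ∨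
        (SameFace b w (e s) x ∧ SameFace b w s y)) := by
  set t := e s with ht
  have hst : s ≠ t := (he.ne_self hs).symm
  have htS : t ∈ S := he.mem_of hs
  have hbst : b s ≠ t := part1_b hb hw he hs hint
  have hwst : w s ≠ t := part1_w hb hw he hs hint
  have hB' : IsPairing (S \ {s, t}) (removeP b s t) :=
    rp_pairing hb.1 hst (hb.ne_self hs) (hb.ne_self htS) hbst hb hs htS
  have hW' : IsPairing (S \ {s, t}) (removeP w s t) :=
    rp_pairing hw.1 hst (hw.ne_self hs) (hw.ne_self htS) hwst hw hs htS
  constructor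
  · intro h
    exact face_forward hb hw he hs hint x y ((sameFace_iff_reach hB' hW').mp h)
  · intro h
    refine (sameFace_iff_reach hB' hW').mpr ?_
    rcases h with h | ⟨hsx, hty⟩ | ⟨htx, hsy⟩
    · by_cases hsx : SameFace b w s x
      · have hsy : SameFace b w s y := sameFace_trans hb hw hsx h
        exact (stp_reach_symm hB' hW' (sweep_s hb hw he hs hint x hsx hx1)).trans
          (sweep_s hb hw he hs hint y hsy hy1)
      by_cases htx : SameFace b w t x
      · have hty : SameFace b w t y := sameFace_trans hb hw htx h
        exact (stp_reach_symm hB' hW' (sweep_t hb hw he hs hint x htx hx2)).trans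
          (sweep_t hb hw he hs hint y hty hy2)
      · exact face_avoid hb hw he hs hint x y hsx htx ((sameFace_iff_reach hb hw).mp h)
    · exact (stp_reach_symm hB' hW' (sweep_s hb hw he hs hint x hsx hx1)).trans
        (sweep_t hb hw he hs hint y hty hy2)
    · exact (stp_reach_symm hB' hW' (sweep_t hb hw he hs hint x htx hx2)).trans
        (sweep_s hb hw he hs hint y hsy hy1)

lemma face_count :
    numFaces S b w
      = numFaces (S \ {s, e s}) (removeP b s (e s)) (removeP w s (e s)) + 1 := by
  classical
  set t := e s with ht
  have hst : s ≠ t := (he.ne_self hs).symm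
  have htS : t ∈ S := he.mem_of hs
  have hbs : b s ≠ s := hb.ne_self hs
  have hbst : b s ≠ t := part1_b hb hw he hs hint
  have hbsS : b s ∈ S := hb.mem_of hs
  have hsym : ∀ {u v}, SameFace b w u v → SameFace b w v u := fun h => sameFace_symm hb hw h
  have htr : ∀ {u v r}, SameFace b w u v → SameFace b w v r → SameFace b w u r :=
    fun h1 h2 => sameFace_trans hb hw h1 h2
  have classEq : ∀ {x y}, SameFace b w x y → faceOf S b w x = faceOf S b w y :=
    fun h => filter_rel_eq @hsym @htr h S
  set B := removeP b s t
  set W := removeP w s t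
  set S' := S \ {s, t} with hS'
  set F1 := faceOf S b w s with hF1
  set F2 := faceOf S b w t with hF2
  set M := (F1 ∪ F2) \ {s, t} with hM
  set G := S.image (faceOf S b w) with hG
  have memFace : ∀ {z x : α}, z ∈ faceOf S b w x ↔ z ∈ S ∧ SameFace b w x z :=
    fun {z x} => Finset.mem_filter
  have memFace' : ∀ {z x : α}, z ∈ faceOf S' B W x ↔ z ∈ S' ∧ SameFace B W x z :=
    fun {z x} => Finset.mem_filter
  have memS' : ∀ {z : α}, z ∈ S' ↔ z ∈ S ∧ z ≠ s ∧ z ≠ t := by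
    intro z
    rw [hS', Finset.mem_sdiff, Finset.mem_insert, Finset.mem_singleton]
    tauto
  -- merged face
  have key1 : ∀ x, x ∈ S → x ≠ s → x ≠ t → (SameFace b w s x ∨ SameFace b w t x) →
      faceOf S' B W x = M := by
    intro x hxS hx1 hx2 hor
    ext z
    constructor
    · intro hz
      obtain ⟨hzS', hr⟩ := memFace'.1 hz
      obtain ⟨hzS, hz1, hz2⟩ := memS'.1 hzS'
      have hq := (face_iff hb hw he hs hint hx1 hx2 hz1 hz2).mp hr
      rw [hM, Finset.mem_sdiff, Finset.mem_union, Finset.mem_insert, Finset.mem_singleton]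
      refine ⟨?_, by push_neg; exact ⟨hz1, hz2⟩⟩
      rcases hq with hq | ⟨hq1, hq2⟩ | ⟨hq1, hq2⟩
      · rcases hor with hsx | htx
        · exact Or.inl (memFace.2 ⟨hzS, htr hsx hq⟩)
        · exact Or.inr (memFace.2 ⟨hzS, htr htx hq⟩)
      · exact Or.inr (memFace.2 ⟨hzS, hq2⟩)
      · exact Or.inl (memFace.2 ⟨hzS, hq2⟩)
    · intro hz
      rw [hM, Finset.mem_sdiff, Finset.mem_union, Finset.mem_insert,
        Finset.mem_singleton] at hz
      obtain ⟨hzor, hznot⟩ := hz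
      push_neg at hznot
      have hzS : z ∈ S := by rcases hzor with h | h <;> exact (memFace.1 h).1
      have relz : SameFace b w s z ∨ SameFace b w t z := by
        rcases hzor with h | h
        · exact Or.inl (memFace.1 h).2
        · exact Or.inr (memFace.1 h).2
      refine memFace'.2 ⟨memS'.2 ⟨hzS, hznot.1, hznot.2⟩,
        (face_iff hb hw he hs hint hx1 hx2 hznot.1 hznot.2).mpr ?_⟩
      rcases relz with hsz | htz <;> rcases hor with hsx | htx
      · exact Or.inl (htr (hsym hsx) hsz)
      · exact Or.inr (Or.inr ⟨htx, hsz⟩)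
      · exact Or.inr (Or.inl ⟨hsx, htz⟩)
      · exact Or.inl (htr (hsym htx) htz)
  -- untouched faces
  have key2 : ∀ x, x ∈ S → ¬ SameFace b w s x → ¬ SameFace b w t x →
      faceOf S' B W x = faceOf S b w x := by
    intro x hxS hsx htx
    have hx1 : x ≠ s := fun hh => hsx (by rw [hh]; exact sameFace_refl b w s)
    have hx2 : x ≠ t := fun hh => htx (by rw [hh]; exact sameFace_refl b w t)
    ext z
    constructor
    · intro hz
      obtain ⟨hzS', hr⟩ := memFace'.1 hz
      obtain ⟨hzS, hz1, hz2⟩ := memS'.1 hzS'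
      have hq := (face_iff hb hw he hs hint hx1 hx2 hz1 hz2).mp hr
      rcases hq with hq | ⟨hq1, _⟩ | ⟨hq1, _⟩
      · exact memFace.2 ⟨hzS, hq⟩
      · exact absurd hq1 hsx
      · exact absurd hq1 htx
    · intro hz
      obtain ⟨hzS, hxz⟩ := memFace.1 hz
      have hz1 : z ≠ s := fun hh => hsx (hsym (hh ▸ hxz))
      have hz2 : z ≠ t := fun hh => htx (hsym (hh ▸ hxz))
      exact memFace'.2 ⟨memS'.2 ⟨hzS, hz1, hz2⟩,
        (face_iff hb hw he hs hint hx1 hx2 hz1 hz2).mpr (Or.inl hxz)⟩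
  have hsF1 : s ∈ F1 := memFace.2 ⟨hs, sameFace_refl b w s⟩
  have htF2 : t ∈ F2 := memFace.2 ⟨htS, sameFace_refl b w t⟩
  have hbsF1 : b s ∈ F1 := memFace.2 ⟨hbsS, sameFace_b hb hw s⟩
  have hbsM : b s ∈ M := by
    rw [hM, Finset.mem_sdiff, Finset.mem_insert, Finset.mem_singleton]
    exact ⟨Finset.mem_union_left _ hbsF1, by push_neg; exact ⟨hbs, hbst⟩⟩
  have hF1F2 : F1 ≠ F2 := by
    intro h
    have := memFace.1 (h ▸ hsF1)
    exact hint (hsym this.2)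
  have hF1G : F1 ∈ G := Finset.mem_image.2 ⟨s, hs, rfl⟩
  have hF2G : F2 ∈ G := Finset.mem_image.2 ⟨t, htS, rfl⟩
  have himg : S'.image (faceOf S' B W) = insert M ((G.erase F1).erase F2) := by
    ext F
    constructor
    · intro hF
      obtain ⟨x, hx, rfl⟩ := Finset.mem_image.1 hF
      obtain ⟨hxS, hx1, hx2⟩ := memS'.1 hx
      by_cases hsx : SameFace b w s x
      · rw [key1 x hxS hx1 hx2 (Or.inl hsx)]
        exact Finset.mem_insert_self _ _
      by_cases htx : SameFace b w t x
      · rw [key1 x hxS hx1 hx2 (Or.inr htx)]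
        exact Finset.mem_insert_self _ _
      · rw [key2 x hxS hsx htx]
        refine Finset.mem_insert_of_mem (Finset.mem_erase.2 ⟨?_, Finset.mem_erase.2
          ⟨?_, Finset.mem_image.2 ⟨x, hxS, rfl⟩⟩⟩)
        · intro hh
          exact htx (hsym (memFace.1 (hh ▸ htF2)).2)
        · intro hh
          exact hsx (hsym (memFace.1 (hh ▸ hsF1)).2)
    · intro hF
      rcases Finset.mem_insert.1 hF with rfl | hF'
      · refine Finset.mem_image.2 ⟨b s, memS'.2 ⟨hbsS, hbs, hbst⟩, ?_⟩
        exact key1 (b s) hbsS hbs hbst (Or.inl (sameFace_b hb hw s))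
      · obtain ⟨hne2, hrest⟩ := Finset.mem_erase.1 hF'
        obtain ⟨hne1, hFG⟩ := Finset.mem_erase.1 hrest
        obtain ⟨x, hxS, rfl⟩ := Finset.mem_image.1 hFG
        have hsx : ¬ SameFace b w s x := fun h => hne1 (classEq h).symm
        have htx : ¬ SameFace b w t x := fun h => hne2 (classEq h).symm
        have hx1 : x ≠ s := fun hh => hsx (by rw [hh]; exact sameFace_refl b w s)
        have hx2 : x ≠ t := fun hh => htx (by rw [hh]; exact sameFace_refl b w t)
        exact Finset.mem_image.2 ⟨x, memS'.2 ⟨hxS, hx1, hx2⟩, key2 x hxS hsx htx⟩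
  have hMne : M ∉ (G.erase F1).erase F2 := by
    intro hM'
    obtain ⟨_, hrest⟩ := Finset.mem_erase.1 hM'
    obtain ⟨hne1, hMG⟩ := Finset.mem_erase.1 hrest
    obtain ⟨x, hxS, hMx⟩ := Finset.mem_image.1 hMG
    have hbsx : b s ∈ faceOf S b w x := hMx ▸ hbsM
    have hxbs : SameFace b w x (b s) := (memFace.1 hbsx).2
    have hxs : SameFace b w x s := htr hxbs (hsym (sameFace_b hb hw s))
    exact hne1 (hMx ▸ classEq hxs)
  have hF2e : F2 ∈ G.erase F1 := Finset.mem_erase.2 ⟨hF1F2.symm, hF2G⟩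
  have h2 : 1 < G.card := Finset.one_lt_card.mpr ⟨F1, hF1G, F2, hF2G, hF1F2⟩
  have hcount : numFaces S' B W = ((G.erase F1).erase F2).card + 1 := by
    show (S'.image (faceOf S' B W)).card = _
    rw [himg, Finset.card_insert_of_notMem hMne]
  have hcount2 : ((G.erase F1).erase F2).card = G.card - 2 := by
    rw [Finset.card_erase_of_mem hF2e, Finset.card_erase_of_mem hF1G]
    omega
  have : numFaces S b w = G.card := rfl
  omega

end Face2
section Comp

variable {S : Finset α} {b w e : Equiv.Perm α} {s : α}

variable (hb : IsPairing S b) (hw : IsPairing S w) (he : IsPairing S e) (hs : s ∈ S)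
  (hint : ¬ SameFace b w s (e s))

include hb hw he hs hint

lemma comp_forward : ∀ x y,
    Relation.ReflTransGen
      (Stp3 (removeP b s (e s)) (removeP w s (e s)) (removeP e s (e s))) x y →
    Relation.ReflTransGen (Stp3 b w e) x y := by
  set t := e s with ht
  have hst : s ≠ t := (he.ne_self hs).symm
  have htS : t ∈ S := he.mem_of hs
  have hbs : b s ≠ s := hb.ne_self hs
  have hbt : b t ≠ t := hb.ne_self htS
  have hbst : b s ≠ t := part1_b hb hw he hs hint
  have hws : w s ≠ s := hw.ne_self hs
  have hwt : w t ≠ t := hw.ne_self htS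
  have hwst : w s ≠ t := part1_w hb hw he hs hint
  have hes : e s = t := rfl
  have het : e t = s := by rw [← hes, he.1]
  intro x y hxy
  induction hxy with
  | refl => exact Relation.ReflTransGen.refl
  | @tail u v _ hstep ih =>
    rcases hstep with h' | h' | h'
    · by_cases h1 : u = s
      · subst h1; rw [rp_s hb.1 hst hbs hbt hbst] at h'; exact h' ▸ ih
      by_cases h2 : u = t
      · subst h2; rw [rp_t hb.1 hst hbs hbt hbst] at h'; exact h' ▸ ih
      by_cases h3 : u = b s
      · subst h3
        rw [rp_fs hb.1 hst hbs hbt hbst] at h'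
        subst h'
        exact ih.tail (Or.inl (hb.1 s)) |>.tail (Or.inr (Or.inr hes)) |>.tail (Or.inl rfl)
      by_cases h4 : u = b t
      · subst h4
        rw [rp_ft hb.1 hst hbs hbt hbst] at h'
        subst h'
        exact ih.tail (Or.inl (hb.1 t)) |>.tail (Or.inr (Or.inr het)) |>.tail (Or.inl rfl)
      · rw [rp_other hb.1 hst hbs hbt hbst h1 h2 h3 h4] at h'
        exact ih.tail (Or.inl h')
    · by_cases h1 : u = s
      · subst h1; rw [rp_s hw.1 hst hws hwt hwst] at h'; exact h' ▸ ih
      by_cases h2 : u = t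
      · subst h2; rw [rp_t hw.1 hst hws hwt hwst] at h'; exact h' ▸ ih
      by_cases h3 : u = w s
      · subst h3
        rw [rp_fs hw.1 hst hws hwt hwst] at h'
        subst h'
        exact ih.tail (Or.inr (Or.inl (hw.1 s))) |>.tail (Or.inr (Or.inr hes))
          |>.tail (Or.inr (Or.inl rfl))
      by_cases h4 : u = w t
      · subst h4
        rw [rp_ft hw.1 hst hws hwt hwst] at h'
        subst h'
        exact ih.tail (Or.inr (Or.inl (hw.1 t))) |>.tail (Or.inr (Or.inr het))
          |>.tail (Or.inr (Or.inl rfl))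
      · rw [rp_other hw.1 hst hws hwt hwst h1 h2 h3 h4] at h'
        exact ih.tail (Or.inr (Or.inl h'))
    · by_cases h1 : u = s
      · subst h1; rw [rpe_s he.1 hst hes] at h'; exact h' ▸ ih
      by_cases h2 : u = t
      · subst h2; rw [rpe_t he.1 hst hes] at h'; exact h' ▸ ih
      · rw [rpe_other he.1 hst hes h1 h2] at h'
        exact ih.tail (Or.inr (Or.inr h'))

lemma comp_backward : ∀ x y, Relation.ReflTransGen (Stp3 b w e) x y →
    Relation.ReflTransGen
      (Stp3 (removeP b s (e s)) (removeP w s (e s)) (removeP e s (e s)))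
      (if x = s then b s else if x = e s then b (e s) else x)
      (if y = s then b s else if y = e s then b (e s) else y) := by
  set t := e s with ht
  have hst : s ≠ t := (he.ne_self hs).symm
  have htS : t ∈ S := he.mem_of hs
  have hbs : b s ≠ s := hb.ne_self hs
  have hbt : b t ≠ t := hb.ne_self htS
  have hbst : b s ≠ t := part1_b hb hw he hs hint
  have hbts : b t ≠ s := rp_fts hb.1 hbst
  have hws : w s ≠ s := hw.ne_self hs
  have hwt : w t ≠ t := hw.ne_self htS
  have hwst : w s ≠ t := part1_w hb hw he hs hint
  have hwts : w t ≠ s := rp_fts hw.1 hwst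
  have hes : e s = t := rfl
  have het : e t = s := by rw [← hes, he.1]
  have hB' : IsPairing (S \ {s, t}) (removeP b s t) :=
    rp_pairing hb.1 hst hbs hbt hbst hb hs htS
  have hW' : IsPairing (S \ {s, t}) (removeP w s t) :=
    rp_pairing hw.1 hst hws hwt hwst hw hs htS
  have hE' : IsPairing (S \ {s, t}) (removeP e s t) := rpe_pairing he.1 hst rfl he
  have hmono : ∀ {u v},
      Relation.ReflTransGen (Stp (removeP b s t) (removeP w s t)) u v →
      Relation.ReflTransGen
        (Stp3 (removeP b s t) (removeP w s t) (removeP e s t)) u v := by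
    intro u v h
    refine Relation.ReflTransGen.mono ?_ u v h
    rintro a c (h' | h')
    · exact Or.inl h'
    · exact Or.inr (Or.inl h')
  have hbsws : Relation.ReflTransGen
      (Stp3 (removeP b s t) (removeP w s t) (removeP e s t)) (b s) (w s) :=
    hmono (sweep_s hb hw he hs hint (w s) (sameFace_w hb hw s) hws)
  have hbtwt : Relation.ReflTransGen
      (Stp3 (removeP b s t) (removeP w s t) (removeP e s t)) (b t) (w t) := by
    refine hmono ?_
    refine (stp_reach_symm hB' hW' (Relation.ReflTransGen.single
      (Or.inl (rp_fs hb.1 hst hbs hbt hbst)))).trans ?_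
    exact sweep_t hb hw he hs hint (w t) (sameFace_w hb hw t) hwt
  set π : α → α := fun x => if x = s then b s else if x = t then b t else x with hπ
  have hπs : π s = b s := by simp [hπ]
  have hπt : π t = b t := by simp [hπ, hst.symm]
  have hπo : ∀ {x}, x ≠ s → x ≠ t → π x = x := by
    intro x h1 h2; simp [hπ, h1, h2]
  intro x y hxy
  induction hxy with
  | refl => exact Relation.ReflTransGen.refl
  | @tail u v _ hstep ih =>
    have goalstep : Relation.ReflTransGen
        (Stp3 (removeP b s t) (removeP w s t) (removeP e s t)) (π u) (π v) := by
      rcases hstep with h' | h' | h'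
      · by_cases h1 : u = s
        · subst h1; rw [← h', hπs, hπo hbs hbst]
        by_cases h2 : u = t
        · subst h2; rw [← h', hπt, hπo hbts hbt]
        by_cases h3 : u = b s
        · subst h3; rw [← h', hb.1, hπs, hπo hbs hbst]
        by_cases h4 : u = b t
        · subst h4; rw [← h', hb.1, hπt, hπo hbts hbt]
        · have hv1 : v ≠ s := fun hh => h3 (by rw [← hb.1 u, h', hh])
          have hv2 : v ≠ t := fun hh => h4 (by rw [← hb.1 u, h', hh])
          rw [hπo h1 h2, hπo hv1 hv2]
          exact Relation.ReflTransGen.single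
            (Or.inl (by rw [rp_other hb.1 hst hbs hbt hbst h1 h2 h3 h4]; exact h'))
      · by_cases h1 : u = s
        · subst h1
          rw [← h', hπs, hπo hws hwst]
          exact hbsws
        by_cases h2 : u = t
        · subst h2
          rw [← h', hπt, hπo hwts hwt]
          exact hbtwt
        by_cases h3 : u = w s
        · subst h3
          rw [← h', hw.1, hπs, hπo hws hwst]
          exact stp3_reach_symm hB' hW' hE' hbsws
        by_cases h4 : u = w t
        · subst h4
          rw [← h', hw.1, hπt, hπo hwts hwt]
          exact stp3_reach_symm hB' hW' hE' hbtwt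
        · have hv1 : v ≠ s := fun hh => h3 (by rw [← hw.1 u, h', hh])
          have hv2 : v ≠ t := fun hh => h4 (by rw [← hw.1 u, h', hh])
          rw [hπo h1 h2, hπo hv1 hv2]
          exact Relation.ReflTransGen.single
            (Or.inr (Or.inl (by rw [rp_other hw.1 hst hws hwt hwst h1 h2 h3 h4]; exact h')))
      · by_cases h1 : u = s
        · subst h1
          rw [← h', hes, hπs, hπt]
          exact Relation.ReflTransGen.single (Or.inl (rp_fs hb.1 hst hbs hbt hbst))
        by_cases h2 : u = t
        · subst h2
          rw [← h', het, hπt, hπs]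
          exact Relation.ReflTransGen.single (Or.inl (rp_ft hb.1 hst hbs hbt hbst))
        · have hv1 : v ≠ s := fun hh => h2 (by rw [← he.1 u, h', hh, ← het, he.1])
          have hv2 : v ≠ t := fun hh => h1 (by rw [← he.1 u, h', hh, ← hes, he.1])
          rw [hπo h1 h2, hπo hv1 hv2]
          exact Relation.ReflTransGen.single
            (Or.inr (Or.inr (by rw [rpe_other he.1 hst hes h1 h2]; exact h')))
    exact ih.trans goalstep

lemma comp_iff {x y : α} (hx1 : x ≠ s) (hx2 : x ≠ e s) (hy1 : y ≠ s) (hy2 : y ≠ e s) :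
    SameComponent (removeP b s (e s)) (removeP w s (e s)) (removeP e s (e s)) x y ↔
      SameComponent b w e x y := by
  set t := e s with ht
  have hst : s ≠ t := (he.ne_self hs).symm
  have htS : t ∈ S := he.mem_of hs
  have hB' : IsPairing (S \ {s, t}) (removeP b s t) :=
    rp_pairing hb.1 hst (hb.ne_self hs) (hb.ne_self htS) (part1_b hb hw he hs hint) hb hs htS
  have hW' : IsPairing (S \ {s, t}) (removeP w s t) :=
    rp_pairing hw.1 hst (hw.ne_self hs) (hw.ne_self htS) (part1_w hb hw he hs hint) hw hs htS
  have hE' : IsPairing (S \ {s, t}) (removeP e s t) := rpe_pairing he.1 hst rfl he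
  constructor
  · intro h
    exact (sameComponent_iff_reach hb hw he).mpr
      (comp_forward hb hw he hs hint x y ((sameComponent_iff_reach hB' hW' hE').mp h))
  · intro h
    have := comp_backward hb hw he hs hint x y ((sameComponent_iff_reach hb hw he).mp h)
    rw [if_neg hx1, if_neg hx2, if_neg hy1, if_neg hy2] at this
    exact (sameComponent_iff_reach hB' hW' hE').mpr this

lemma comp_count :
    numComponents (S \ {s, e s}) (removeP b s (e s)) (removeP w s (e s))
      (removeP e s (e s)) = numComponents S b w e := by
  set t := e s with ht
  have hst : s ≠ t := (he.ne_self hs).symm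
  have htS : t ∈ S := he.mem_of hs
  have hbs : b s ≠ s := hb.ne_self hs
  have hbst : b s ≠ t := part1_b hb hw he hs hint
  have hbsS : b s ∈ S := hb.mem_of hs
  have hes : e s = t := rfl
  have het : e t = s := by rw [← hes, he.1]
  simp only [numComponents]
  refine countShrink S s t (b s) hs htS hst hbsS hbs hbst
    (sameComponent_refl b w e) sameComponent_symm sameComponent_trans
    (fun x y hx1 hx2 hy1 hy2 => comp_iff hb hw he hs hint hx1 hx2 hy1 hy2)
    ⟨b, Subgroup.subset_closure (by simp), rfl⟩ ?_
  refine (sameComponent_iff_reach hb hw he).mpr ?_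
  exact Relation.ReflTransGen.tail
    (Relation.ReflTransGen.single (show Stp3 b w e t s from Or.inr (Or.inr het)))
    (show Stp3 b w e s (b s) from Or.inl rfl)

end Comp

/-- if `E₀ = {s, e s}` is an interface edge of the map
`M = (S,b,w,e)`, then no extremity of `E₀` is a leaf, and `M \ E₀` has the same
numbers of vertices and connected components as `M`, one fewer face, and one fewer
edge; consequently `d(M \ E₀) = d(M)`. -/
theorem remove_interface_edge (S : Finset α) (b w e : Equiv.Perm α)
    (hb : IsPairing S b) (hw : IsPairing S w) (he : IsPairing S e)
    (s : α) (hs : s ∈ S)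
    (hinterface : IsInterface b w s (e s)) :
    (b s ≠ e s ∧ w s ≠ e s) ∧
    numVertices (S \ {s, e s}) (removeP b s (e s)) (removeP w s (e s))
        (removeP e s (e s)) = numVertices S b w e ∧
    numComponents (S \ {s, e s}) (removeP b s (e s)) (removeP w s (e s))
        (removeP e s (e s)) = numComponents S b w e ∧
    numFaces S b w
      = numFaces (S \ {s, e s}) (removeP b s (e s)) (removeP w s (e s)) + 1 ∧
    numEdges S = numEdges (S \ {s, e s}) + 1 ∧
    dInv (S \ {s, e s}) (removeP b s (e s)) (removeP w s (e s)) (removeP e s (e s))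
      = dInv S b w e := by
  have hint : ¬ SameFace b w s (e s) := hinterface
  have h1b : b s ≠ e s := part1_b hb hw he hs hint
  have h1w : w s ≠ e s := part1_w hb hw he hs hint
  have hVb := vertex_count hb he hs h1b
  have hVw := vertex_count hw he hs h1w
  have hC := comp_count hb hw he hs hint
  have hF := face_count hb hw he hs hint
  have hV : numVertices (S \ {s, e s}) (removeP b s (e s)) (removeP w s (e s))
      (removeP e s (e s)) = numVertices S b w e := by
    simp only [numVertices, hVb, hVw]
  have hE : numEdges S = numEdges (S \ {s, e s}) + 1 := by
    have hst : s ≠ e s := (he.ne_self hs).symm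
    have htS : e s ∈ S := he.mem_of hs
    have hsub : ({s, e s} : Finset α) ⊆ S := by
      intro z hz
      rw [Finset.mem_insert, Finset.mem_singleton] at hz
      rcases hz with rfl | rfl
      · exact hs
      · exact htS
    have hcards : ({s, e s} : Finset α).card = 2 := by
      rw [Finset.card_insert_of_notMem (by simpa using hst), Finset.card_singleton]
    have h2 : 2 ≤ S.card := hcards ▸ Finset.card_le_card hsub
    have hsd := Finset.card_sdiff_of_subset hsub
    rw [hcards] at hsd
    simp only [numEdges]
    omega
  refine ⟨⟨h1b, h1w⟩, hV, hC, hF, hE, ?_⟩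
  simp only [dInv, eulerChar]
  rw [hV, hC, hF, hE]
  push_cast
  ring


end
end
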